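/- arXiv:2212.06248 — 5 statements merged into one kernel-verified Lean document; each statement's English description precedes it below -/
import Mathlib

section
/- Let G be a finite graph with a fixed orientation. An element x ∈ Flow(G) is irreducible (admits no decomposition x = y + z with y, z nonzero in Flow(G) and y · z ≥ 0) if and only if x is the class of an oriented cycle of G. -/
/-- `x : E → ℤ` is a flow: it lies in `ker ∂ ⊆ C₁(G;ℤ)`. -/
def IsFlow {V E : Type} [Fintype E] [DecidableEq V] (src tgt : E → V) (x : E → ℤ) : Prop :=
  ∀ v : V, ∑ e, x e * ((if tgt e = v then 1 else 0) - (if src e = v then 1 else 0)) = 0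

/-- Two edges share a vertex. -/
def SharesVertex {V E : Type} (src tgt : E → V) (a b : E) : Prop :=
  src a = src b ∨ src a = tgt b ∨ tgt a = src b ∨ tgt a = tgt b

/-- The head of an edge `e` in the orientation determined by the sign of `x e`. -/
def flowHead {V E : Type} (src tgt : E → V) (x : E → ℤ) (e : E) : V :=
  if x e = 1 then tgt e else src e

/-- `x` is the class of an oriented cycle of `G`: a nonzero flow with entries in `{-1,0,1}`,
such that each vertex has at most one incoming (equivalently, outgoing) edge of the cycle,
and whose support is connected. -/
def IsCycleClass {V E : Type} [Fintype E] [DecidableEq V] (src tgt : E → V)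
    (x : E → ℤ) : Prop :=
  x ≠ 0 ∧ IsFlow src tgt x ∧ (∀ e, x e = -1 ∨ x e = 0 ∨ x e = 1) ∧
  (∀ v : V, ({e : E | x e ≠ 0 ∧ flowHead src tgt x e = v} : Set E).Subsingleton) ∧
  (∀ a b : E, x a ≠ 0 → x b ≠ 0 →
    Relation.ReflTransGen (fun p q => x p ≠ 0 ∧ x q ≠ 0 ∧ SharesVertex src tgt p q) a b)

namespace FlowAux

variable {V E : Type} [Fintype V] [Fintype E] [DecidableEq V]

/-- head of an edge in the orientation given by the sign of `x`. -/
def fh (src tgt : E → V) (x : E → ℤ) (e : E) : V := if 0 < x e then tgt e else src e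

/-- tail of an edge in the orientation given by the sign of `x`. -/
def ft (src tgt : E → V) (x : E → ℤ) (e : E) : V := if 0 < x e then src e else tgt e

lemma term_eq (src tgt : E → V) (x : E → ℤ) (e : E) (w : V) :
    x e * ((if tgt e = w then (1:ℤ) else 0) - (if src e = w then 1 else 0)) =
    |x e| * ((if fh src tgt x e = w then (1:ℤ) else 0) -
      (if ft src tgt x e = w then 1 else 0)) := by
  rcases lt_trichotomy (x e) 0 with h | h | h
  · simp only [fh, ft, if_neg (show ¬ (0:ℤ) < x e by omega), abs_of_neg h]; ring
  · simp [h]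
  · simp only [fh, ft, if_pos h, abs_of_pos h]

lemma cons (src tgt : E → V) (x : E → ℤ) (hx : IsFlow src tgt x) (w : V) :
    ∑ e, |x e| * ((if fh src tgt x e = w then (1:ℤ) else 0) -
      (if ft src tgt x e = w then 1 else 0)) = 0 :=
  (Finset.sum_congr rfl fun e _ => (term_eq src tgt x e w).symm).trans (hx w)

lemma exists_next (src tgt : E → V) (x : E → ℤ) (hx : IsFlow src tgt x) (e : E)
    (he : x e ≠ 0) : ∃ e', x e' ≠ 0 ∧ ft src tgt x e' = fh src tgt x e := by
  classical
  by_contra hcon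
  push_neg at hcon
  set w := fh src tgt x e with hw
  have h0 := cons src tgt x hx w
  have hterm : ∀ a ∈ (Finset.univ : Finset E),
      0 ≤ |x a| * ((if fh src tgt x a = w then (1:ℤ) else 0) -
        (if ft src tgt x a = w then 1 else 0)) := by
    intro a _
    by_cases ha : x a = 0
    · simp [ha]
    · rw [if_neg (hcon a ha)]
      split_ifs <;> simp [abs_nonneg]
  have hpos : 0 < |x e| * ((if fh src tgt x e = w then (1:ℤ) else 0) -
      (if ft src tgt x e = w then 1 else 0)) := by
    rw [if_pos hw.symm, if_neg (hcon e he)]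
    simpa using abs_pos.mpr he
  have hsum : 0 < ∑ a, |x a| * ((if fh src tgt x a = w then (1:ℤ) else 0) -
      (if ft src tgt x a = w then 1 else 0)) :=
    Finset.sum_pos' hterm ⟨e, Finset.mem_univ e, hpos⟩
  omega

lemma tele (F : ℕ → ℤ) {i j : ℕ} (h : i ≤ j) :
    ∑ k ∈ Finset.Ico i j, (F (k+1) - F k) = F j - F i := by
  induction j, h using Nat.le_induction with
  | base => simp
  | succ n hn ih => rw [Finset.sum_Ico_succ_top (by omega), ih]; ring

lemma sign_term (src tgt : E → V) (x : E → ℤ) (e : E) (he : x e ≠ 0) (w : V) :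
    (x e).sign * ((if tgt e = w then (1:ℤ) else 0) - (if src e = w then 1 else 0)) =
    (if fh src tgt x e = w then (1:ℤ) else 0) - (if ft src tgt x e = w then 1 else 0) := by
  rcases lt_trichotomy (x e) 0 with h | h | h
  · rw [Int.sign_eq_neg_one_iff_neg.mpr h]
    simp only [fh, ft, if_neg (show ¬ (0:ℤ) < x e by omega)]; ring
  · exact absurd h he
  · rw [Int.sign_eq_one_iff_pos.mpr h]
    simp only [fh, ft, if_pos h, one_mul]

lemma shares_of (src tgt : E → V) (x : E → ℤ) (a b : E)
    (h : ft src tgt x b = fh src tgt x a) : SharesVertex src tgt a b := by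
  unfold ft fh at h
  unfold SharesVertex
  split_ifs at h
  · exact Or.inr (Or.inr (Or.inl h.symm))
  · exact Or.inl h.symm
  · exact Or.inr (Or.inr (Or.inr h.symm))
  · exact Or.inr (Or.inl h.symm)

lemma isFlow_sub (src tgt : E → V) {y z : E → ℤ} (hy : IsFlow src tgt y)
    (hz : IsFlow src tgt z) : IsFlow src tgt (y - z) := by
  intro v
  have h1 := hy v
  have h2 := hz v
  simp only [Pi.sub_apply, sub_mul]
  rw [Finset.sum_sub_distrib]
  omega


lemma exists_conformal_cycle (src tgt : E → V) (x : E → ℤ) (hx : IsFlow src tgt x)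
    (hne : x ≠ 0) : ∃ c : E → ℤ, IsCycleClass src tgt c ∧ ∀ e, c e ≠ 0 → 1 ≤ c e * x e := by
  classical
  obtain ⟨e0, he0⟩ : ∃ e, x e ≠ 0 := by
    by_contra h; push_neg at h; exact hne (funext fun e => h e)
  set nxt : {e : E // x e ≠ 0} → {e : E // x e ≠ 0} := fun p =>
    ⟨(exists_next src tgt x hx p.1 p.2).choose,
     (exists_next src tgt x hx p.1 p.2).choose_spec.1⟩ with hnxt
  set g : ℕ → {e : E // x e ≠ 0} := fun n => nxt^[n] ⟨e0, he0⟩ with hg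
  set f : ℕ → E := fun n => (g n).1 with hfdef
  have hf : ∀ n, x (f n) ≠ 0 := fun n => (g n).2
  have hstep : ∀ n, ft src tgt x (f (n+1)) = fh src tgt x (f n) := by
    intro n
    have h1 : g (n+1) = nxt (g n) := Function.iterate_succ_apply' nxt n _
    show ft src tgt x (g (n+1)).1 = _
    rw [h1]
    exact (exists_next src tgt x hx (g n).1 (g n).2).choose_spec.2
  set v : ℕ → V := fun n => ft src tgt x (f n) with hvdef
  have hv : ∀ n, fh src tgt x (f n) = v (n+1) := fun n => (hstep n).symm
  have hP : ∃ n, ∃ m, m < n ∧ v m = v n := by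
    obtain ⟨a, b, hab, heq⟩ := Fintype.exists_ne_map_eq_of_card_lt
      (fun k : Fin (Fintype.card V + 1) => v k) (by simp)
    rcases lt_or_gt_of_ne (fun h : (a : ℕ) = (b : ℕ) => hab (Fin.ext h)) with h | h
    · exact ⟨b, a, h, heq⟩
    · exact ⟨a, b, h, heq.symm⟩
  set j := Nat.find hP with hjdef
  obtain ⟨i, hij, hvij⟩ : ∃ m, m < j ∧ v m = v j := Nat.find_spec hP
  have hmin : ∀ m n, m < n → n < j → v m ≠ v n := by
    intro m n h1 h2 heq
    exact Nat.find_min hP h2 ⟨m, h1, heq⟩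
  have inj : ∀ m n, m < j → n < j → v m = v n → m = n := by
    intro m n hm hn heq
    rcases lt_trichotomy m n with h | h | h
    · exact absurd heq (hmin m n h hn)
    · exact h
    · exact absurd heq.symm (hmin n m h hm)
  have inj2 : ∀ k l, i ≤ k → k < j → i ≤ l → l < j → v (k+1) = v (l+1) → k = l := by
    have aux : ∀ k l, i ≤ k → k < j → i ≤ l → l < j → k ≤ l → v (k+1) = v (l+1) → k = l := by
      intro k l hik hkj hil hlj hkl heq
      rcases Nat.lt_or_ge (l+1) j with h | h
      · exact Nat.succ_injective (inj _ _ (by omega) h heq)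
      · have hl1 : l + 1 = j := by omega
        rcases Nat.lt_or_ge (k+1) j with h2 | h2
        · exfalso
          have heq2 : v i = v (k+1) := by rw [hvij, ← hl1, ← heq]
          exact hmin i (k+1) (by omega) h2 heq2
        · omega
    intro k l hik hkj hil hlj heq
    rcases Nat.le_total k l with h | h
    · exact aux k l hik hkj hil hlj h heq
    · exact (aux l k hil hlj hik hkj h heq.symm).symm
  have finj : ∀ k l, k < j → l < j → f k = f l → k = l := by
    intro k l hkj hlj hfe
    exact inj k l hkj hlj (congrArg (ft src tgt x) hfe)
  set c : E → ℤ := fun e => if ∃ k, i ≤ k ∧ k < j ∧ f k = e then (x e).sign else 0 with hcdef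
  have hc_of : ∀ k, i ≤ k → k < j → c (f k) = (x (f k)).sign := by
    intro k h1 h2
    simp only [hcdef]
    rw [if_pos ⟨k, h1, h2, rfl⟩]
  have hsign_ne : ∀ k, (x (f k)).sign ≠ 0 := by
    intro k h
    exact hf k (Int.sign_eq_zero_iff_zero.mp h)
  have hc_supp : ∀ e, c e ≠ 0 → (∃ k, i ≤ k ∧ k < j ∧ f k = e) ∧ c e = (x e).sign ∧ x e ≠ 0 := by
    intro e hce
    by_cases h : ∃ k, i ≤ k ∧ k < j ∧ f k = e
    · refine ⟨h, by simp only [hcdef]; rw [if_pos h], ?_⟩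
      intro h0
      apply hce
      simp only [hcdef]
      rw [if_pos h, h0]
      rfl
    · exact absurd (by simp only [hcdef]; rw [if_neg h]) hce
  have hcne : c ≠ 0 := by
    intro h
    have h1 : c (f i) = 0 := by rw [h]; rfl
    rw [hc_of i le_rfl hij] at h1
    exact hsign_ne i h1
  have hcfk_ne : ∀ k, i ≤ k → k < j → c (f k) ≠ 0 := by
    intro k h1 h2
    rw [hc_of k h1 h2]
    exact hsign_ne k
  -- c is a flow
  have hcflow : IsFlow src tgt c := by
    intro w
    have h1 : ∑ e ∈ (Finset.Ico i j).image f,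
        c e * ((if tgt e = w then (1:ℤ) else 0) - (if src e = w then 1 else 0)) =
        ∑ e, c e * ((if tgt e = w then (1:ℤ) else 0) - (if src e = w then 1 else 0)) := by
      refine Finset.sum_subset (Finset.subset_univ _) ?_
      intro e _ he
      have hce : c e = 0 := by
        simp only [hcdef]
        rw [if_neg]
        rintro ⟨k, hk1, hk2, hk3⟩
        exact he (Finset.mem_image.mpr ⟨k, Finset.mem_Ico.mpr ⟨hk1, hk2⟩, hk3⟩)
      rw [hce, zero_mul]
    rw [← h1, Finset.sum_image (fun k hk l hl h =>
      finj k l (Finset.mem_Ico.mp hk).2 (Finset.mem_Ico.mp hl).2 h)]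
    have h2 : ∀ k ∈ Finset.Ico i j,
        c (f k) * ((if tgt (f k) = w then (1:ℤ) else 0) - (if src (f k) = w then 1 else 0)) =
        (if v (k+1) = w then (1:ℤ) else 0) - (if v k = w then 1 else 0) := by
      intro k hk
      obtain ⟨hk1, hk2⟩ := Finset.mem_Ico.mp hk
      rw [hc_of k hk1 hk2, sign_term src tgt x (f k) (hf k) w, hv k]
    rw [Finset.sum_congr rfl h2, tele (fun k => if v k = w then (1:ℤ) else 0) (le_of_lt hij)]
    rw [← hvij]
    exact sub_self _
  -- entries in {-1,0,1}
  have hpm : ∀ e, c e = -1 ∨ c e = 0 ∨ c e = 1 := by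
    intro e
    by_cases h : ∃ k, i ≤ k ∧ k < j ∧ f k = e
    · have : c e = (x e).sign := by simp only [hcdef]; rw [if_pos h]
      rw [this]
      rcases lt_trichotomy (x e) 0 with h1 | h1 | h1
      · exact Or.inl (Int.sign_eq_neg_one_iff_neg.mpr h1)
      · exact Or.inr (Or.inl (by rw [h1]; rfl))
      · exact Or.inr (Or.inr (Int.sign_eq_one_iff_pos.mpr h1))
    · exact Or.inr (Or.inl (by simp only [hcdef]; rw [if_neg h]))
  -- flowHead of c matches fh of x on support
  have hfh : ∀ e, c e ≠ 0 → flowHead src tgt c e = fh src tgt x e := by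
    intro e hce
    obtain ⟨_, hsgn, hxe⟩ := hc_supp e hce
    rcases lt_trichotomy (x e) 0 with h | h | h
    · have hc1 : c e = -1 := by rw [hsgn]; exact Int.sign_eq_neg_one_iff_neg.mpr h
      simp only [flowHead, fh]
      rw [if_neg (show ¬ c e = 1 by rw [hc1]; omega), if_neg (show ¬ (0:ℤ) < x e by omega)]
    · exact absurd h hxe
    · have hc1 : c e = 1 := by rw [hsgn]; exact Int.sign_eq_one_iff_pos.mpr h
      simp only [flowHead, fh]
      rw [if_pos hc1, if_pos h]
  -- heads subsingleton
  have hhead : ∀ w : V, ({e : E | c e ≠ 0 ∧ flowHead src tgt c e = w} : Set E).Subsingleton := by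
    intro w e1 he1 e2 he2
    obtain ⟨⟨k, hk1, hk2, hk3⟩, _, _⟩ := hc_supp e1 he1.1
    obtain ⟨⟨l, hl1, hl2, hl3⟩, _, _⟩ := hc_supp e2 he2.1
    have h1 : v (k+1) = w := by rw [← hv k, hk3, ← hfh e1 he1.1]; exact he1.2
    have h2 : v (l+1) = w := by rw [← hv l, hl3, ← hfh e2 he2.1]; exact he2.2
    have : k = l := inj2 k l hk1 hk2 hl1 hl2 (h1.trans h2.symm)
    rw [← hk3, ← hl3, this]
  -- connectivity
  have hrel_symm : Symmetric (fun p q => c p ≠ 0 ∧ c q ≠ 0 ∧ SharesVertex src tgt p q) := by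
    rintro p q ⟨h1, h2, h3⟩
    refine ⟨h2, h1, ?_⟩
    rcases h3 with h | h | h | h
    · exact Or.inl h.symm
    · exact Or.inr (Or.inr (Or.inl h.symm))
    · exact Or.inr (Or.inl h.symm)
    · exact Or.inr (Or.inr (Or.inr h.symm))
  have hchain : ∀ k, i ≤ k → ∀ l, k ≤ l → l < j →
      Relation.ReflTransGen (fun p q => c p ≠ 0 ∧ c q ≠ 0 ∧ SharesVertex src tgt p q)
        (f k) (f l) := by
    intro k hik l
    induction l with
    | zero =>
      intro hkl _
      have : k = 0 := Nat.le_zero.mp hkl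
      rw [this]
    | succ n ih =>
      intro hkl hlj
      rcases Nat.lt_or_ge k (n+1) with h | h
      · refine Relation.ReflTransGen.tail (ih (by omega) (by omega)) ?_
        exact ⟨hcfk_ne n (by omega) (by omega), hcfk_ne (n+1) (by omega) hlj,
          shares_of src tgt x (f n) (f (n+1)) (hstep n)⟩
      · have : k = n + 1 := by omega
        rw [this]
  have hconn : ∀ a b : E, c a ≠ 0 → c b ≠ 0 →
      Relation.ReflTransGen (fun p q => c p ≠ 0 ∧ c q ≠ 0 ∧ SharesVertex src tgt p q) a b := by
    intro a b ha hb
    obtain ⟨⟨k, hk1, hk2, hk3⟩, _, _⟩ := hc_supp a ha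
    obtain ⟨⟨l, hl1, hl2, hl3⟩, _, _⟩ := hc_supp b hb
    rw [← hk3, ← hl3]
    rcases Nat.le_total k l with h | h
    · exact hchain k hk1 l h hl2
    · exact (@Relation.ReflTransGen.stdSymm _ _ ⟨hrel_symm⟩).symm _ _ (hchain l hl1 k h hk2)
  refine ⟨c, ⟨hcne, hcflow, hpm, hhead, hconn⟩, ?_⟩
  intro e hce
  obtain ⟨_, hsgn, hxe⟩ := hc_supp e hce
  rcases lt_trichotomy (x e) 0 with h | h | h
  · rw [hsgn, Int.sign_eq_neg_one_iff_neg.mpr h, neg_one_mul]; omega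
  · exact absurd h hxe
  · rw [hsgn, Int.sign_eq_one_iff_pos.mpr h, one_mul]; omega

end FlowAux


/-- An element `x ∈ Flow(G)` is irreducible (nonzero, and admitting no decomposition
`x = y + z` with `y, z ∈ Flow(G)` nonzero and `y · z ≥ 0`) if and only if `x` is the class of
an oriented cycle of `G`. -/
theorem flow_irreducible_iff_cycle {V E : Type} [Fintype V] [Fintype E] [DecidableEq V]
    (src tgt : E → V) (x : E → ℤ) (hx : IsFlow src tgt x) :
    (x ≠ 0 ∧ ∀ y z : E → ℤ, IsFlow src tgt y → IsFlow src tgt z → y ≠ 0 → z ≠ 0 →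
        y + z = x → ∑ e, y e * z e < 0) ↔ IsCycleClass src tgt x := by
  classical
  constructor
  · rintro ⟨hne, hirr⟩
    obtain ⟨c, hcyc, hconf⟩ := FlowAux.exists_conformal_cycle src tgt x hx hne
    by_cases hzc : x - c = 0
    · have hxc : x = c := by rwa [sub_eq_zero] at hzc
      rw [hxc]; exact hcyc
    · exfalso
      have hlt := hirr c (x - c) hcyc.2.1 (FlowAux.isFlow_sub src tgt hx hcyc.2.1) hcyc.1 hzc
        (by funext e; simp)
      have hge : 0 ≤ ∑ e, c e * (x - c) e := by
        apply Finset.sum_nonneg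
        intro e _
        by_cases hce : c e = 0
        · simp [hce]
        · have h1 := hconf e hce
          have h2 : c e * c e = 1 := by
            rcases hcyc.2.2.1 e with h | h | h
            · rw [h]; norm_num
            · exact absurd h hce
            · rw [h]; norm_num
          simp only [Pi.sub_apply, mul_sub]
          omega
      linarith
  · rintro ⟨hne, hflow, hpm, hhead, hconn⟩
    refine ⟨hne, fun y z hy hz hy0 hz0 hyz => ?_⟩
    by_contra hge
    push_neg at hge
    have hsum : ∀ e, y e + z e = x e := fun e => congrFun hyz e
    have hpt : ∀ e, y e * z e ≤ 0 := by
      intro e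
      have h := hsum e
      rcases hpm e with h1 | h1 | h1
      · rcases le_or_gt (y e) (-1) with h2 | h2 <;> nlinarith
      · nlinarith [sq_nonneg (y e + z e), sq_nonneg (y e), sq_nonneg (z e)]
      · rcases le_or_gt (y e) 0 with h2 | h2 <;> nlinarith
    have hall : ∀ e, y e * z e = 0 := by
      intro e
      by_contra h
      have hlt : y e * z e < 0 := lt_of_le_of_ne (hpt e) h
      have hs : ∑ e, y e * z e < ∑ _e : E, (0:ℤ) :=
        Finset.sum_lt_sum (fun a _ => hpt a) ⟨e, Finset.mem_univ e, hlt⟩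
      rw [Finset.sum_const_zero] at hs
      linarith
    have hsplit : ∀ e, (y e = 0 ∧ z e = x e) ∨ (z e = 0 ∧ y e = x e) := by
      intro e
      rcases mul_eq_zero.mp (hall e) with h | h
      · exact Or.inl ⟨h, by have := hsum e; omega⟩
      · exact Or.inr ⟨h, by have := hsum e; omega⟩
    obtain ⟨p0, hp0⟩ : ∃ e, y e ≠ 0 := Function.ne_iff.mp hy0
    obtain ⟨q0, hq0⟩ : ∃ e, z e ≠ 0 := Function.ne_iff.mp hz0
    have hxp0 : x p0 ≠ 0 := by
      rcases hsplit p0 with ⟨h1, _⟩ | ⟨_, h2⟩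
      · exact absurd h1 hp0
      · rw [← h2]; exact hp0
    have hyq0 : y q0 = 0 := by
      rcases hsplit q0 with ⟨h1, _⟩ | ⟨h1, _⟩
      · exact h1
      · exact absurd h1 hq0
    have hxq0 : x q0 ≠ 0 := by
      have := hsum q0; intro h; apply hq0; omega
    have hbd : ∀ a b, Relation.ReflTransGen
        (fun p q => x p ≠ 0 ∧ x q ≠ 0 ∧ SharesVertex src tgt p q) a b →
        y a ≠ 0 → y b = 0 →
        ∃ p q, (x p ≠ 0 ∧ x q ≠ 0 ∧ SharesVertex src tgt p q) ∧ y p ≠ 0 ∧ y q = 0 := by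
      intro a b h
      induction h with
      | refl => intro h1 h2; exact absurd h2 h1
      | @tail b' c' _ hbc ih =>
        intro h1 h2
        by_cases hyb : y b' = 0
        · exact ih h1 hyb
        · exact ⟨b', c', hbc, hyb, h2⟩
    obtain ⟨p, q, ⟨hxp, hxq, hshare⟩, hyp, hyq⟩ :=
      hbd p0 q0 (hconn p0 q0 hxp0 hxq0) hp0 hyq0
    obtain ⟨w, hpw, hqw⟩ : ∃ w, (src p = w ∨ tgt p = w) ∧ (src q = w ∨ tgt q = w) := by
      rcases hshare with h | h | h | h
      · exact ⟨src q, Or.inl h, Or.inl rfl⟩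
      · exact ⟨tgt q, Or.inl h, Or.inr rfl⟩
      · exact ⟨src q, Or.inr h, Or.inl rfl⟩
      · exact ⟨tgt q, Or.inr h, Or.inr rfl⟩
    set ftl : E → V := fun e => if x e = 1 then src e else tgt e with hftl
    have hht : ∀ e, x e ≠ 0 → (src e = w ∨ tgt e = w) →
        flowHead src tgt x e = w ∨ ftl e = w := by
      intro e hxe htouch
      rcases hpm e with h | h | h
      · simp only [flowHead, hftl]
        rw [if_neg (show ¬ x e = 1 by omega), if_neg (show ¬ x e = 1 by omega)]
        tauto
      · exact absurd h hxe
      · simp only [flowHead, hftl]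
        rw [if_pos h, if_pos h]
        tauto
    have hloop : ∀ e, src e = tgt e → flowHead src tgt x e = ftl e := by
      intro e h
      simp only [flowHead, hftl]
      split_ifs
      · exact h.symm
      · exact h
    -- the counting sets
    set A : Finset E := Finset.univ.filter
      (fun e => x e ≠ 0 ∧ flowHead src tgt x e = w ∧ src e ≠ tgt e) with hA
    set B : Finset E := Finset.univ.filter
      (fun e => x e ≠ 0 ∧ ftl e = w ∧ src e ≠ tgt e) with hB
    set Ay : Finset E := Finset.univ.filter
      (fun e => y e ≠ 0 ∧ x e ≠ 0 ∧ flowHead src tgt x e = w ∧ src e ≠ tgt e) with hAy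
    set By : Finset E := Finset.univ.filter
      (fun e => y e ≠ 0 ∧ x e ≠ 0 ∧ ftl e = w ∧ src e ≠ tgt e) with hBy
    have hptx : ∀ e, x e * ((if tgt e = w then (1:ℤ) else 0) - (if src e = w then 1 else 0)) =
        (if x e ≠ 0 ∧ flowHead src tgt x e = w ∧ src e ≠ tgt e then (1:ℤ) else 0) -
        (if x e ≠ 0 ∧ ftl e = w ∧ src e ≠ tgt e then 1 else 0) := by
      intro e
      rcases hpm e with h | h | h
      · have hhd : flowHead src tgt x e = src e := by
          rw [flowHead, if_neg (show ¬ x e = 1 by omega)]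
        have hft : ftl e = tgt e := by
          simp only [hftl]; rw [if_neg (show ¬ x e = 1 by omega)]
        rw [h, hhd, hft, neg_one_mul, neg_sub]
        by_cases hl : src e = tgt e
        · rw [hl]; simp
        · simp [h, hl]
      · simp [h]
      · have hhd : flowHead src tgt x e = tgt e := by rw [flowHead, if_pos h]
        have hft : ftl e = src e := by simp only [hftl]; rw [if_pos h]
        rw [h, hhd, hft, one_mul]
        by_cases hl : src e = tgt e
        · rw [hl]; simp
        · simp [h, hl]
    have hpty : ∀ e, y e * ((if tgt e = w then (1:ℤ) else 0) - (if src e = w then 1 else 0)) =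
        (if y e ≠ 0 ∧ x e ≠ 0 ∧ flowHead src tgt x e = w ∧ src e ≠ tgt e then (1:ℤ) else 0) -
        (if y e ≠ 0 ∧ x e ≠ 0 ∧ ftl e = w ∧ src e ≠ tgt e then 1 else 0) := by
      intro e
      by_cases hye : y e = 0
      · simp [hye]
      · have hyx : y e = x e := by
          rcases hsplit e with ⟨h1, _⟩ | ⟨_, h2⟩
          · exact absurd h1 hye
          · exact h2
        rw [hyx, hptx e]
        simp [hye]
    have hAB : A.card = B.card := by
      have h0 := hflow w
      rw [Finset.sum_congr rfl (fun e _ => hptx e), Finset.sum_sub_distrib,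
        Finset.sum_boole, Finset.sum_boole] at h0
      have := sub_eq_zero.mp h0
      exact_mod_cast this
    have hAyBy : Ay.card = By.card := by
      have h0 := hy w
      rw [Finset.sum_congr rfl (fun e _ => hpty e), Finset.sum_sub_distrib,
        Finset.sum_boole, Finset.sum_boole] at h0
      have := sub_eq_zero.mp h0
      exact_mod_cast this
    have hA1 : A.card ≤ 1 := by
      rw [Finset.card_le_one]
      intro a ha b hb
      rw [hA, Finset.mem_filter] at ha hb
      exact hhead w ⟨ha.2.1, ha.2.2.1⟩ ⟨hb.2.1, hb.2.2.1⟩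
    by_cases hq : flowHead src tgt x q = w
    · have hqonly : ∀ e, x e ≠ 0 → flowHead src tgt x e = w → e = q :=
        fun e h1 h2 => hhead w ⟨h1, h2⟩ ⟨hxq, hq⟩
      have hp_ft : ftl p = w ∧ src p ≠ tgt p := by
        by_cases hl : src p = tgt p
        · exfalso
          have h1 : flowHead src tgt x p = w := by
            rcases hht p hxp hpw with h | h
            · exact h
            · rw [hloop p hl]; exact h
          have := hqonly p hxp h1
          rw [this] at hyp
          exact hyp hyq
        · rcases hht p hxp hpw with h | h
          · exfalso
            have := hqonly p hxp h
            rw [this] at hyp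
            exact hyp hyq
          · exact ⟨h, hl⟩
      have hpBy : p ∈ By := by
        rw [hBy, Finset.mem_filter]
        exact ⟨Finset.mem_univ p, hyp, hxp, hp_ft.1, hp_ft.2⟩
      have hAy1 : 1 ≤ Ay.card := by
        rw [hAyBy]
        exact Finset.card_pos.mpr ⟨p, hpBy⟩
      obtain ⟨a, ha⟩ := Finset.card_pos.mp hAy1
      rw [hAy, Finset.mem_filter] at ha
      have := hqonly a ha.2.2.1 ha.2.2.2.1
      rw [this] at ha
      exact ha.2.1 hyq
    · have hq_ft : ftl q = w ∧ src q ≠ tgt q := by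
        have hl : src q ≠ tgt q := by
          intro hl
          rcases hht q hxq hqw with h | h
          · exact hq h
          · exact hq (by rw [hloop q hl]; exact h)
        rcases hht q hxq hqw with h | h
        · exact absurd h hq
        · exact ⟨h, hl⟩
      have hqB : q ∈ B := by
        rw [hB, Finset.mem_filter]
        exact ⟨Finset.mem_univ q, hxq, hq_ft.1, hq_ft.2⟩
      by_cases hpf : flowHead src tgt x p = w
      · by_cases hl : src p = tgt p
        · have hB1 : 1 ≤ B.card := Finset.card_pos.mpr ⟨q, hqB⟩
          have hA1' : 1 ≤ A.card := by omega
          obtain ⟨a, ha⟩ := Finset.card_pos.mp hA1'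
          rw [hA, Finset.mem_filter] at ha
          have hap : a = p := hhead w ⟨ha.2.1, ha.2.2.1⟩ ⟨hxp, hpf⟩
          exact ha.2.2.2 (hap ▸ hl)
        · have hpAy : p ∈ Ay := by
            rw [hAy, Finset.mem_filter]
            exact ⟨Finset.mem_univ p, hyp, hxp, hpf, hl⟩
          have hBy1 : 1 ≤ By.card := by
            rw [← hAyBy]
            exact Finset.card_pos.mpr ⟨p, hpAy⟩
          obtain ⟨b, hb⟩ := Finset.card_pos.mp hBy1
          rw [hBy, Finset.mem_filter] at hb
          have hbB : b ∈ B := by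
            rw [hB, Finset.mem_filter]
            exact ⟨Finset.mem_univ b, hb.2.2⟩
          have hbq : b ≠ q := by
            intro h
            rw [h] at hb
            exact hb.2.1 hyq
          have h2B : 2 ≤ B.card := Finset.one_lt_card.mpr ⟨b, hbB, q, hqB, hbq⟩
          omega
      · have hp_ft : ftl p = w ∧ src p ≠ tgt p := by
          have hl : src p ≠ tgt p := by
            intro hl
            rcases hht p hxp hpw with h | h
            · exact hpf h
            · exact hpf (by rw [hloop p hl]; exact h)
          rcases hht p hxp hpw with h | h
          · exact absurd h hpf
          · exact ⟨h, hl⟩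
        have hpB : p ∈ B := by
          rw [hB, Finset.mem_filter]
          exact ⟨Finset.mem_univ p, hxp, hp_ft.1, hp_ft.2⟩
        have hpq : p ≠ q := by
          intro h
          rw [h] at hyp
          exact hyp hyq
        have h2B : 2 ≤ B.card := Finset.one_lt_card.mpr ⟨p, hpB, q, hqB, hpq⟩
        omega
end

section
/- Let G be a finite connected graph with a fixed orientation, with flow lattice Flow(G) = ker ∂ and cut lattice Cut(G) = im ∂* inside C₁(G;ℤ). If H is an oriented subgraph of G whose class [H] lies in Flow(G) ⊕ Cut(G) ⊆ C₁(G;ℤ), then [H] = [H₁] + [H₂] where H₁ is an oriented Eulerian subgraph (i.e. [H₁] ∈ Flow(G)), H₂ is an oriented cut (i.e. [H₂] ∈ Cut(G)), and H₁ and H₂ have disjoint edge sets. -/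
/-- `x : E → ℤ` is a cut: it lies in `Cut(G) = im ∂* ⊆ C₁(G;ℤ)`. -/
def IsCut {V E : Type} (src tgt : E → V) (x : E → ℤ) : Prop :=
  ∃ z : V → ℤ, ∀ e, x e = z (tgt e) - z (src e)

/-- The graph is connected. -/
def GraphConnected {V E : Type} (src tgt : E → V) : Prop :=
  ∀ v w : V, Relation.ReflTransGen
    (fun a b => ∃ e, (src e = a ∧ tgt e = b) ∨ (src e = b ∧ tgt e = a)) v w

/-- If `s + t ∈ {-1, 0, 1}` for integers `s`, `t`, then `s * t ≤ 0`. -/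
lemma aux_mul_nonpos (s t : ℤ) (h : s + t = -1 ∨ s + t = 0 ∨ s + t = 1) : s * t ≤ 0 := by
  rcases lt_trichotomy s 0 with hs | hs | hs <;>
    rcases lt_trichotomy t 0 with ht | ht | ht
  · omega
  · simp [ht]
  · exact (mul_neg_of_neg_of_pos hs ht).le
  · simp [hs]
  · simp [hs]
  · simp [hs]
  · exact (mul_neg_of_pos_of_neg hs ht).le
  · simp [ht]
  · omega

/-- Let `G` be a finite connected oriented graph.  If `x₁ ∈ Flow(G)`, `x₂ ∈ Cut(G)`, and
`x₁ + x₂` has all coordinates in `{-1,0,1}` (the class of an oriented subgraph), then `x₁`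
and `x₂` have all coordinates in `{-1,0,1}` (an oriented Eulerian subgraph and an oriented
cut, respectively) and they have disjoint supports. -/
theorem flow_cut_decomposition {V E : Type} [Fintype V] [Fintype E] [DecidableEq V]
    (src tgt : E → V) (hconn : GraphConnected src tgt)
    (x₁ x₂ : E → ℤ) (h₁ : IsFlow src tgt x₁) (h₂ : IsCut src tgt x₂)
    (h : ∀ e, x₁ e + x₂ e = -1 ∨ x₁ e + x₂ e = 0 ∨ x₁ e + x₂ e = 1) :
    (∀ e, x₁ e = -1 ∨ x₁ e = 0 ∨ x₁ e = 1) ∧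
    (∀ e, x₂ e = -1 ∨ x₂ e = 0 ∨ x₂ e = 1) ∧
    (∀ e, x₁ e = 0 ∨ x₂ e = 0) := by
  obtain ⟨z, hz⟩ := h₂
  -- Orthogonality of flows and cuts: ∑ x₁ e * x₂ e = 0
  have key : ∑ e, x₁ e * x₂ e = 0 := by
    have inner : ∀ e, x₁ e * x₂ e =
        ∑ v, z v * (x₁ e * ((if tgt e = v then (1:ℤ) else 0) - (if src e = v then 1 else 0))) := by
      intro e
      rw [hz]
      simp only [mul_sub, mul_ite, mul_one, mul_zero, Finset.sum_sub_distrib,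
        Finset.sum_ite_eq, Finset.mem_univ, if_true]
      ring
    calc ∑ e, x₁ e * x₂ e
        = ∑ e, ∑ v, z v * (x₁ e * ((if tgt e = v then (1:ℤ) else 0) - (if src e = v then 1 else 0))) := by
          exact Finset.sum_congr rfl fun e _ => inner e
      _ = ∑ v, z v * ∑ e, x₁ e * ((if tgt e = v then (1:ℤ) else 0) - (if src e = v then 1 else 0)) := by
          rw [Finset.sum_comm]
          exact Finset.sum_congr rfl fun v _ => by rw [Finset.mul_sum]
      _ = 0 := by
          refine Finset.sum_eq_zero fun v _ => ?_
          rw [h₁ v, mul_zero]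
  -- Each product vanishes
  have hmul : ∀ e, x₁ e * x₂ e = 0 := by
    have hnn : ∀ e ∈ (Finset.univ : Finset E), (0:ℤ) ≤ -(x₁ e * x₂ e) := by
      intro e _
      have := aux_mul_nonpos (x₁ e) (x₂ e) (h e)
      linarith
    have hsum : ∑ e, -(x₁ e * x₂ e) = 0 := by
      rw [Finset.sum_neg_distrib, key, neg_zero]
    intro e
    have := (Finset.sum_eq_zero_iff_of_nonneg hnn).mp hsum e (Finset.mem_univ e)
    linarith
  refine ⟨?_, ?_, ?_⟩ <;> intro e <;>
    (have hm := hmul e; have hh := h e;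
     rcases mul_eq_zero.mp hm with h0 | h0 <;> omega)
end

section
/- Let G be a finite graph with a fixed orientation. An orientation O of G is acyclic if and only if there is no orientation O' of G, distinct from O, such that [O] − [O'] ∈ 2·Flow(G) + 2·Cut(G) with the Flow-component nonzero; more precisely, the restriction of [O] to Flow(G) is the unique short characteristic element in its coset of Char(Flow(G))/2Flow(G) if and only if O is acyclic. -/
/-- An orientation of `G`, given by its class `[O] ∈ {±1}^E` relative to the reference
orientation. -/
def IsOrientation {E : Type} (O : E → ℤ) : Prop := ∀ e, O e = 1 ∨ O e = -1

/-- The orientation `O` is acyclic: it contains no directed cycle of `G`. -/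
def IsAcyclicOrientation {V E : Type} [Fintype E] [DecidableEq V] (src tgt : E → V)
    (O : E → ℤ) : Prop :=
  ¬ ∃ x : E → ℤ, IsCycleClass src tgt x ∧ ∀ e, x e = 0 ∨ x e = O e

section Aux

variable {V E : Type} [Fintype V] [Fintype E] [DecidableEq V] (src tgt : E → V)

/-- The tail of an edge `e` in the orientation determined by the sign of `x e`. -/
def tailOf (g : E → ℤ) (e : E) : V := if g e = 1 then src e else tgt e

lemma edge_identity' (g : E → ℤ) {e : E} (hg : g e = -1 ∨ g e = 0 ∨ g e = 1)
    (hge : g e ≠ 0) (v : V) :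
    g e * ((if tgt e = v then (1:ℤ) else 0) - (if src e = v then 1 else 0)) =
      (if flowHead src tgt g e = v then (1:ℤ) else 0)
      - (if tailOf src tgt g e = v then 1 else 0) := by
  rcases hg with h | h | h
  · rw [flowHead, tailOf, h]
    split_ifs <;> first | omega | (exfalso; assumption)
  · exact absurd h hge
  · rw [flowHead, tailOf, h]
    split_ifs <;> first | omega | (exfalso; assumption)

lemma edge_identity (g : E → ℤ) {e : E} (hg : g e = -1 ∨ g e = 0 ∨ g e = 1) (v : V) :
    g e * ((if tgt e = v then (1:ℤ) else 0) - (if src e = v then 1 else 0)) =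
      (if g e ≠ 0 ∧ flowHead src tgt g e = v then (1:ℤ) else 0)
      - (if g e ≠ 0 ∧ tailOf src tgt g e = v then 1 else 0) := by
  by_cases hge : g e = 0
  · simp [hge]
  · rw [edge_identity' src tgt g hg hge v]
    simp [hge]

lemma step_exists (g : E → ℤ) (hflow : IsFlow src tgt g)
    (hval : ∀ e, g e = -1 ∨ g e = 0 ∨ g e = 1) (v : V)
    (h : ∃ e, g e ≠ 0 ∧ flowHead src tgt g e = v) :
    ∃ e, g e ≠ 0 ∧ tailOf src tgt g e = v := by
  by_contra hc
  push_neg at hc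
  have hsum : ∑ e : E, ((if g e ≠ 0 ∧ flowHead src tgt g e = v then (1:ℤ) else 0)
      - (if g e ≠ 0 ∧ tailOf src tgt g e = v then 1 else 0)) = 0 :=
    (Finset.sum_congr rfl fun e _ => (edge_identity src tgt g (hval e) v).symm).trans
      (hflow v)
  rw [Finset.sum_sub_distrib] at hsum
  have h2 : ∑ e : E, (if g e ≠ 0 ∧ tailOf src tgt g e = v then (1:ℤ) else 0) = 0 := by
    apply Finset.sum_eq_zero
    intro e _
    rw [if_neg]
    rintro ⟨h1, h2⟩
    exact hc e h1 h2
  have h1 : ∑ e : E, (if g e ≠ 0 ∧ flowHead src tgt g e = v then (1:ℤ) else 0) = 0 := by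
    linarith
  obtain ⟨e0, he1, he2⟩ := h
  have h3 := (Finset.sum_eq_zero_iff_of_nonneg
    (fun e _ => by split_ifs <;> norm_num)).1 h1 e0 (Finset.mem_univ _)
  rw [if_pos ⟨he1, he2⟩] at h3
  exact one_ne_zero h3

/-- A directed walk in the support of a flow `g`. -/
noncomputable def walkSeq (g : E → ℤ) (hflow : IsFlow src tgt g)
    (hval : ∀ e, g e = -1 ∨ g e = 0 ∨ g e = 1) (e₀ : E) (h₀ : g e₀ ≠ 0) :
    ℕ → {e : E // g e ≠ 0} := fun n =>
  Nat.rec ⟨e₀, h₀⟩ (fun _ p =>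
    ⟨(step_exists src tgt g hflow hval (flowHead src tgt g p.1) ⟨p.1, p.2, rfl⟩).choose,
     (step_exists src tgt g hflow hval (flowHead src tgt g p.1) ⟨p.1, p.2, rfl⟩).choose_spec.1⟩) n

lemma walkSeq_tail (g : E → ℤ) (hflow : IsFlow src tgt g)
    (hval : ∀ e, g e = -1 ∨ g e = 0 ∨ g e = 1) (e₀ : E) (h₀ : g e₀ ≠ 0) (n : ℕ) :
    tailOf src tgt g (walkSeq src tgt g hflow hval e₀ h₀ (n+1)).1 =
      flowHead src tgt g (walkSeq src tgt g hflow hval e₀ h₀ n).1 :=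
  (step_exists src tgt g hflow hval
    (flowHead src tgt g (walkSeq src tgt g hflow hval e₀ h₀ n).1)
    ⟨(walkSeq src tgt g hflow hval e₀ h₀ n).1,
      (walkSeq src tgt g hflow hval e₀ h₀ n).2, rfl⟩).choose_spec.2

lemma exists_cycleClass (g : E → ℤ) (hflow : IsFlow src tgt g)
    (hval : ∀ e, g e = -1 ∨ g e = 0 ∨ g e = 1) (hne : g ≠ 0) :
    ∃ x : E → ℤ, IsCycleClass src tgt x ∧ ∀ e, x e = 0 ∨ x e = g e := by
  classical
  obtain ⟨e₀, h₀⟩ : ∃ e, g e ≠ 0 := by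
    by_contra hc
    push_neg at hc
    exact hne (funext fun e => hc e)
  set w : ℕ → {e : E // g e ≠ 0} := walkSeq src tgt g hflow hval e₀ h₀ with hw
  set h : ℕ → V := fun n => flowHead src tgt g (w n).1 with hh
  have htail : ∀ n, tailOf src tgt g (w (n+1)).1 = h n := fun n =>
    walkSeq_tail src tgt g hflow hval e₀ h₀ n
  -- pigeonhole: the head vertices repeat
  have hP : ∃ n, ∃ i, i < n ∧ h i = h n := by
    obtain ⟨a, b, hab, heq⟩ := Fintype.exists_ne_map_eq_of_card_lt
      (fun m : Fin (Fintype.card V + 1) => h m.1) (by simp)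
    rcases lt_or_gt_of_ne hab with hlt | hlt
    · exact ⟨b.1, a.1, hlt, heq⟩
    · exact ⟨a.1, b.1, hlt, heq.symm⟩
  set j := Nat.find hP with hj
  obtain ⟨i, hij, hijh⟩ := Nat.find_spec hP
  rw [← hj] at hij hijh
  have hbelow : ∀ a b, a < b → b < j → h a ≠ h b := by
    intro a b h1 h2 h3
    exact Nat.find_min hP h2 ⟨a, h1, h3⟩
  -- heads on the window (i, j] are pairwise distinct
  have hkey : ∀ p q, i + 1 ≤ p → p < q → q ≤ j → h p ≠ h q := by
    intro p q hp hpq hqj hpqeq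
    rcases Nat.lt_or_ge q j with hq | hq
    · exact hbelow p q hpq hq hpqeq
    · have hqj' : q = j := le_antisymm hqj hq
      subst hqj'
      have : h p = h i := hpqeq.trans hijh.symm
      exact hbelow i p (by omega) (by omega) this.symm
  have hdist : ∀ p q, p ∈ Finset.Ico (i+1) (j+1) → q ∈ Finset.Ico (i+1) (j+1) →
      h p = h q → p = q := by
    intro p q hp hq hpq
    rw [Finset.mem_Ico, Nat.lt_succ_iff] at hp hq
    rcases Nat.lt_trichotomy p q with hlt | heq | hlt
    · exact absurd hpq (hkey p q hp.1 hlt hq.2)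
    · exact heq
    · exact absurd hpq.symm (hkey q p hq.1 hlt hp.2)
  have heinj : ∀ p ∈ Finset.Ico (i+1) (j+1), ∀ q ∈ Finset.Ico (i+1) (j+1),
      (w p).1 = (w q).1 → p = q := by
    intro p hp q hq hpq
    apply hdist p q hp hq
    rw [hh]
    simp only
    rw [hpq]
  set C : Finset E := (Finset.Ico (i+1) (j+1)).image (fun k => (w k).1) with hC
  set x : E → ℤ := fun e => if e ∈ C then g e else 0 with hx
  have hxC : ∀ e ∈ C, x e = g e := fun e he => if_pos he
  have hxnC : ∀ e ∉ C, x e = 0 := fun e he => if_neg he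
  have hmemC : ∀ {e : E}, x e ≠ 0 → e ∈ C := by
    intro e he
    by_contra hce
    exact he (hxnC e hce)
  have hwinC : ∀ k, i + 1 ≤ k → k ≤ j → (w k).1 ∈ C := by
    intro k h1 h2
    exact Finset.mem_image_of_mem _ (Finset.mem_Ico.2 ⟨h1, Nat.lt_succ_of_le h2⟩)
  have hgC : ∀ e ∈ C, g e ≠ 0 := by
    intro e he
    obtain ⟨k, _, hke⟩ := Finset.mem_image.1 he
    rw [← hke]
    exact (w k).2
  -- x is nonzero
  have hxne : x ≠ 0 := by
    intro hzero
    have hjC : (w j).1 ∈ C := hwinC j (by omega) le_rfl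
    have : x (w j).1 = g (w j).1 := hxC _ hjC
    rw [hzero] at this
    exact (w j).2 this.symm
  -- x is a flow
  have hxflow : IsFlow src tgt x := by
    intro v
    have h1 : ∑ e ∈ C, x e * ((if tgt e = v then (1:ℤ) else 0) -
        (if src e = v then 1 else 0)) = ∑ e : E, x e * ((if tgt e = v then (1:ℤ) else 0) -
        (if src e = v then 1 else 0)) := by
      apply Finset.sum_subset (Finset.subset_univ C)
      intro e _ he
      rw [hxnC e he, zero_mul]
    rw [← h1, hC, Finset.sum_image heinj]
    have h2 : ∀ k ∈ Finset.Ico (i+1) (j+1),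
        x (w k).1 * ((if tgt (w k).1 = v then (1:ℤ) else 0) -
          (if src (w k).1 = v then 1 else 0)) =
        (if flowHead src tgt g (w k).1 = v then (1:ℤ) else 0)
          - (if tailOf src tgt g (w k).1 = v then 1 else 0) := by
      intro k hk
      rw [Finset.mem_Ico, Nat.lt_succ_iff] at hk
      rw [hxC _ (hwinC k hk.1 hk.2)]
      exact edge_identity' src tgt g (hval _) (w k).2 v
    rw [Finset.sum_congr rfl h2, Finset.sum_Ico_eq_sum_range]
    have h3 : ∀ t ∈ Finset.range (j + 1 - (i + 1)),
        ((if flowHead src tgt g (w (i+1+t)).1 = v then (1:ℤ) else 0)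
          - (if tailOf src tgt g (w (i+1+t)).1 = v then 1 else 0)) =
        ((fun s => if h (i + s) = v then (1:ℤ) else 0) (t+1) -
         (fun s => if h (i + s) = v then (1:ℤ) else 0) t) := by
      intro t _
      simp only
      have e1 : i + 1 + t = (i + t) + 1 := by omega
      rw [e1, htail (i + t)]
      have e2 : h ((i + t) + 1) = flowHead src tgt g (w ((i + t) + 1)).1 := rfl
      rw [← e2]
      congr 2 <;> omega
    have h4 := Finset.sum_range_sub (fun s => if h (i + s) = v then (1:ℤ) else 0)
      (j + 1 - (i + 1))
    rw [Finset.sum_congr rfl h3, h4]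
    have e5 : i + (j + 1 - (i + 1)) = j := by omega
    rw [e5, Nat.add_zero, ← hijh, sub_self]
  -- values in {-1, 0, 1}
  have hxval : ∀ e, x e = -1 ∨ x e = 0 ∨ x e = 1 := by
    intro e
    by_cases he : e ∈ C
    · rw [hxC e he]; exact hval e
    · rw [hxnC e he]; right; left; rfl
  -- heads are distinct
  have hhead : ∀ e ∈ C, flowHead src tgt x e = flowHead src tgt g e := by
    intro e he
    rw [flowHead, flowHead, hxC e he]
  have hsub : ∀ v : V, ({e : E | x e ≠ 0 ∧ flowHead src tgt x e = v} : Set E).Subsingleton := by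
    intro v a ha b hb
    obtain ⟨ha1, ha2⟩ := ha
    obtain ⟨hb1, hb2⟩ := hb
    have haC := hmemC ha1
    have hbC := hmemC hb1
    obtain ⟨p, hp, hpe⟩ := Finset.mem_image.1 haC
    obtain ⟨q, hq, hqe⟩ := Finset.mem_image.1 hbC
    have hpq : h p = h q := by
      rw [hh]
      simp only
      rw [hpe, hqe]
      rw [← hhead a haC, ← hhead b hbC, ha2, hb2]
    have := hdist p q hp hq hpq
    rw [← hpe, ← hqe, this]
  -- connectivity
  set R : E → E → Prop := fun p q => x p ≠ 0 ∧ x q ≠ 0 ∧ SharesVertex src tgt p q with hR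
  have hsym : Symmetric R := by
    rintro p q ⟨h1, h2, h3⟩
    refine ⟨h2, h1, ?_⟩
    rcases h3 with hh | hh | hh | hh
    · exact Or.inl hh.symm
    · exact Or.inr (Or.inr (Or.inl hh.symm))
    · exact Or.inr (Or.inl hh.symm)
    · exact Or.inr (Or.inr (Or.inr hh.symm))
  have hshare : ∀ n : ℕ, SharesVertex src tgt (w n).1 (w (n+1)).1 := by
    intro n
    have ht := htail n
    rw [hh] at ht
    simp only at ht
    rw [tailOf, flowHead] at ht
    rw [SharesVertex]
    split_ifs at ht <;> replace ht := ht.symm <;> tauto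
  have hxw : ∀ k, i + 1 ≤ k → k ≤ j → x (w k).1 ≠ 0 := by
    intro k h1 h2
    rw [hxC _ (hwinC k h1 h2)]
    exact (w k).2
  have hchain : ∀ p d, i + 1 ≤ p → p + d ≤ j →
      Relation.ReflTransGen R (w p).1 (w (p+d)).1 := by
    intro p d hp
    induction d with
    | zero => intro _; exact Relation.ReflTransGen.refl
    | succ d ih =>
      intro hle
      have h1 : p + d ≤ j := by omega
      exact (ih h1).tail ⟨hxw _ (by omega) h1, hxw _ (by omega) (by omega), hshare (p+d)⟩
  have hconn : ∀ a b : E, x a ≠ 0 → x b ≠ 0 → Relation.ReflTransGen R a b := by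
    intro a b ha hb
    obtain ⟨p, hp, hpe⟩ := Finset.mem_image.1 (hmemC ha)
    obtain ⟨q, hq, hqe⟩ := Finset.mem_image.1 (hmemC hb)
    rw [Finset.mem_Ico, Nat.lt_succ_iff] at hp hq
    rw [← hpe, ← hqe]
    rcases le_or_gt p q with hle | hlt
    · have := hchain p (q - p) hp.1 (by omega)
      have e1 : p + (q - p) = q := by omega
      rwa [e1] at this
    · have := hchain q (p - q) hq.1 (by omega)
      have e1 : q + (p - q) = p := by omega
      rw [e1] at this
      exact (@Relation.ReflTransGen.symmetric _ R ⟨fun a b h => hsym h⟩).symm _ _ this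
  refine ⟨x, ⟨hxne, hxflow, hxval, hsub, hconn⟩, ?_⟩
  intro e
  by_cases he : e ∈ C
  · right; exact hxC e he
  · left; exact hxnC e he

lemma flow_cut_orth (f c : E → ℤ) (hf : IsFlow src tgt f) (hc : IsCut src tgt c) :
    ∑ e : E, f e * c e = 0 := by
  obtain ⟨z, hz⟩ := hc
  have inner : ∀ e : E, ∑ v : V, z v * ((if tgt e = v then (1:ℤ) else 0) -
      (if src e = v then 1 else 0)) = c e := by
    intro e
    rw [hz e]
    simp [mul_sub, Finset.sum_sub_distrib, mul_ite, mul_one, mul_zero, Finset.sum_ite_eq]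
  calc ∑ e : E, f e * c e
      = ∑ e : E, ∑ v : V, z v * (f e * ((if tgt e = v then (1:ℤ) else 0) -
          (if src e = v then 1 else 0))) := by
        refine Finset.sum_congr rfl fun e _ => ?_
        rw [← inner e, Finset.mul_sum]
        refine Finset.sum_congr rfl fun v _ => ?_
        ring
    _ = ∑ v : V, z v * ∑ e : E, f e * ((if tgt e = v then (1:ℤ) else 0) -
          (if src e = v then 1 else 0)) := by
        rw [Finset.sum_comm]
        refine Finset.sum_congr rfl fun v _ => ?_
        rw [Finset.mul_sum]
    _ = 0 := Finset.sum_eq_zero fun v _ => by rw [hf v, mul_zero]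

end Aux

/-- An orientation `O` of `G` is acyclic if and only if there is no orientation `O'` with
`[O] − [O'] ∈ 2·Flow(G) + 2·Cut(G)` and nonzero `Flow`-component; equivalently, the
restriction of `[O]` to `Flow(G)` is the unique short characteristic element in its coset of
`Char(Flow(G))/2Flow(G)` if and only if `O` is acyclic. -/
theorem acyclic_iff_unique_short {V E : Type} [Fintype V] [Fintype E] [DecidableEq V]
    (src tgt : E → V) (O : E → ℤ) (hO : IsOrientation O) :
    IsAcyclicOrientation src tgt O ↔
      ∀ O' : E → ℤ, IsOrientation O' →
        ∀ f c : E → ℤ, IsFlow src tgt f → IsCut src tgt c →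
          (∀ e, O e - O' e = 2 * f e + 2 * c e) → f = 0 := by
  constructor
  · intro hA O' hO' f c hf hc heq
    by_contra hfne
    have hd : ∀ e, f e + c e = -1 ∨ f e + c e = 0 ∨ f e + c e = 1 := by
      intro e
      have h1 := heq e
      rcases hO e with h2 | h2 <;> rcases hO' e with h3 | h3 <;> omega
    have horth := flow_cut_orth src tgt f c hf hc
    have hsums : ∑ e : E, f e * (f e + c e) = ∑ e : E, f e * f e := by
      have : ∀ e : E, f e * (f e + c e) = f e * f e + f e * c e := fun e => by ring
      rw [Finset.sum_congr rfl fun e _ => this e, Finset.sum_add_distrib, horth, add_zero]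
    have hle : ∀ e ∈ Finset.univ (α := E), f e * (f e + c e) ≤ f e * f e := by
      intro e _
      rcases hd e with h | h | h <;> rw [h] <;> nlinarith [sq_nonneg (f e), sq_nonneg (f e + 1), sq_nonneg (f e - 1)]
    have heach := (Finset.sum_eq_sum_iff_of_le hle).1 hsums
    have hfd : ∀ e, f e = 0 ∨ f e = f e + c e := by
      intro e
      have h1 := heach e (Finset.mem_univ e)
      rcases hd e with h | h | h
      · rw [h] at h1
        have h2 : f e * (f e + 1) = 0 := by nlinarith
        rcases mul_eq_zero.1 h2 with h3 | h3
        · left; exact h3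
        · right; omega
      · rw [h] at h1
        left
        have h2 : f e * f e = 0 := by linarith
        exact mul_self_eq_zero.1 h2
      · rw [h] at h1
        have h2 : f e * (f e - 1) = 0 := by nlinarith
        rcases mul_eq_zero.1 h2 with h3 | h3
        · left; exact h3
        · right; omega
    have hvals : ∀ e, f e = -1 ∨ f e = 0 ∨ f e = 1 := by
      intro e
      rcases hfd e with h | h
      · right; left; exact h
      · have h2 := heq e
        rcases hO e with o | o <;> rcases hO' e with o' | o' <;> omega
    have hcomp : ∀ e, f e = 0 ∨ f e = O e := by
      intro e
      rcases hfd e with h | h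
      · left; exact h
      · have h2 := heq e
        rcases hO e with o | o <;> rcases hO' e with o' | o' <;> omega
    obtain ⟨x, hx, hxg⟩ := exists_cycleClass src tgt f hf hvals hfne
    apply hA
    refine ⟨x, hx, ?_⟩
    intro e
    rcases hxg e with h | h
    · left; exact h
    · rw [h]; exact hcomp e
  · intro hU
    rintro ⟨x, hx, hcomp⟩
    have hO' : IsOrientation (fun e => O e - 2 * x e) := by
      intro e
      rcases hcomp e with h | h <;> rcases hO e with o | o <;> simp only <;> omega
    have hcut0 : IsCut src tgt (fun _ => (0:ℤ)) := ⟨fun _ => 0, fun e => by ring⟩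
    have h0 := hU _ hO' x (fun _ => 0) hx.2.1 hcut0 (fun e => by
      show O e - (O e - 2 * x e) = 2 * x e + 2 * 0
      ring)
    exact hx.1 h0
end

section
/- Let G be a planar graph embedded in S², and let C₁ and C₂ be oriented cycles in G such that [C₁]·[C₂] = 0 and [C₁] + [C₂] is rigid in Flow(G). Then C₁ and C₂ intersect in at most one vertex (in particular they share no edges and are nested). -/
set_option linter.unusedSectionVars false
set_option linter.unreachableTactic false
set_option linter.unusedTactic false
set_option linter.unusedVariables false
set_option linter.unnecessarySeqFocus false
set_option maxHeartbeats 1000000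

section Aux
variable {V E : Type} [Fintype V] [Fintype E] [DecidableEq V] [DecidableEq E]
variable (src tgt : E → V)

/-- head of edge w.r.t. sign of x -/
def zhd (x : E → ℤ) (e : E) : V := if 1 ≤ x e then tgt e else src e
/-- tail of edge w.r.t. sign of x -/
def ztl (x : E → ℤ) (e : E) : V := if 1 ≤ x e then src e else tgt e

lemma term_eq (x : E → ℤ) (e : E) (v : V) :
    x e * ((if tgt e = v then 1 else 0) - (if src e = v then 1 else 0)) =
    ((x e).natAbs : ℤ) * ((if zhd src tgt x e = v then 1 else 0)
      - (if ztl src tgt x e = v then 1 else 0)) := by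
  unfold zhd ztl
  by_cases h : 1 ≤ x e <;> simp only [h, if_true, if_false] <;>
    split_ifs <;> ring_nf <;> omega

lemma flow_count {x : E → ℤ} (hx : IsFlow src tgt x) (v : V) :
    ∑ e, ((x e).natAbs : ℤ) * ((if zhd src tgt x e = v then 1 else 0)
      - (if ztl src tgt x e = v then 1 else 0)) = 0 := by
  rw [← Finset.sum_congr rfl (fun e _ => term_eq src tgt x e v)]
  exact hx v

lemma out_at {x : E → ℤ} (hx : IsFlow src tgt x) {w : V}
    (h : ∃ e, x e ≠ 0 ∧ zhd src tgt x e = w) :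
    ∃ e', x e' ≠ 0 ∧ ztl src tgt x e' = w := by
  by_contra hc
  push_neg at hc
  obtain ⟨e, he, hhd⟩ := h
  have h0 := flow_count src tgt hx w
  have hnn : ∀ e' ∈ Finset.univ (α := E), (0:ℤ) ≤
      ((x e').natAbs : ℤ) * ((if zhd src tgt x e' = w then 1 else 0)
        - (if ztl src tgt x e' = w then 1 else 0)) := by
    intro e' _
    by_cases hz : x e' = 0
    · simp [hz]
    · have := hc e' hz
      split_ifs <;> simp_all <;> positivity
  have hall := (Finset.sum_eq_zero_iff_of_nonneg hnn).1 h0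
  have := hall e (Finset.mem_univ e)
  have hte := hc e he
  rw [hhd] at this
  simp [hte] at this
  omega

lemma in_at {x : E → ℤ} (hx : IsFlow src tgt x) {w : V}
    (h : ∃ e, x e ≠ 0 ∧ ztl src tgt x e = w) :
    ∃ e', x e' ≠ 0 ∧ zhd src tgt x e' = w := by
  by_contra hc
  push_neg at hc
  obtain ⟨e, he, hhd⟩ := h
  have h0 := flow_count src tgt hx w
  have hnp : ∀ e' ∈ Finset.univ (α := E),
      ((x e').natAbs : ℤ) * ((if zhd src tgt x e' = w then 1 else 0)
        - (if ztl src tgt x e' = w then 1 else 0)) ≤ 0 := by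
    intro e' _
    by_cases hz : x e' = 0
    · simp [hz]
    · have := hc e' hz
      split_ifs <;> simp_all
  have hall := (Finset.sum_eq_zero_iff_of_nonpos hnp).1 h0
  have := hall e (Finset.mem_univ e)
  have hte := hc e he
  rw [hhd] at this
  simp [hte] at this
  omega

end Aux

section Aux2
variable {V E : Type} [Fintype V] [Fintype E] [DecidableEq V] [DecidableEq E]
variable (src tgt : E → V)

lemma cyc_reindex (f : ℕ → ℤ) (p : ℕ) (hp : 0 < p) :
    ∑ a ∈ Finset.range p, f ((a+1) % p) = ∑ a ∈ Finset.range p, f a := by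
  apply Finset.sum_bij' (fun a _ => (a+1) % p) (fun b _ => (b + (p-1)) % p)
  · intro a ha; exact Finset.mem_range.2 (Nat.mod_lt _ hp)
  · intro b hb; exact Finset.mem_range.2 (Nat.mod_lt _ hp)
  · intro a ha
    rw [Nat.mod_add_mod]
    have : a + 1 + (p - 1) = a + p := by omega
    rw [this, Nat.add_mod_right, Nat.mod_eq_of_lt (Finset.mem_range.1 ha)]
  · intro b hb
    rw [Nat.mod_add_mod]
    have : b + (p - 1) + 1 = b + p := by omega
    rw [this, Nat.add_mod_right, Nat.mod_eq_of_lt (Finset.mem_range.1 hb)]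
  · intro a ha; rfl

lemma cycFlow (z : E → ℤ) (g : ℕ → E) (p : ℕ) (hp : 0 < p)
    (hinj : ∀ a b, a < p → b < p → g a = g b → a = b)
    (hchain : ∀ a, a < p → ztl src tgt z (g ((a+1) % p)) = zhd src tgt z (g a)) :
    IsFlow src tgt (fun e => if e ∈ (Finset.range p).image g
      then (if 1 ≤ z e then 1 else -1) else 0) := by
  intro v
  have h1 : ∀ e : E,
      (if e ∈ (Finset.range p).image g then (if 1 ≤ z e then (1:ℤ) else -1) else 0) *
        ((if tgt e = v then 1 else 0) - (if src e = v then 1 else 0)) =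
      if e ∈ (Finset.range p).image g
        then ((if zhd src tgt z e = v then 1 else 0) - (if ztl src tgt z e = v then 1 else 0))
        else 0 := by
    intro e
    by_cases hm : e ∈ (Finset.range p).image g
    · simp only [hm, if_true]
      unfold zhd ztl
      by_cases hs : 1 ≤ z e <;> simp only [hs, if_true, if_false] <;> ring
    · simp [hm]
  rw [Finset.sum_congr rfl (fun e _ => h1 e)]
  rw [Finset.sum_ite_mem, Finset.univ_inter]
  rw [Finset.sum_image (fun a ha b hb hab =>
      hinj a b (Finset.mem_range.1 ha) (Finset.mem_range.1 hb) hab)]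
  rw [Finset.sum_sub_distrib]
  have h2 : ∑ a ∈ Finset.range p, (if ztl src tgt z (g a) = v then (1:ℤ) else 0)
      = ∑ a ∈ Finset.range p, (if ztl src tgt z (g ((a+1)%p)) = v then (1:ℤ) else 0) :=
    (cyc_reindex (fun n => if ztl src tgt z (g n) = v then (1:ℤ) else 0) p hp).symm
  rw [h2]
  have h3 : ∀ a ∈ Finset.range p,
      (if ztl src tgt z (g ((a+1)%p)) = v then (1:ℤ) else 0)
        = (if zhd src tgt z (g a) = v then (1:ℤ) else 0) := by
    intro a ha
    rw [hchain a (Finset.mem_range.1 ha)]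
  rw [Finset.sum_congr rfl h3, sub_self]

end Aux2

section Aux3
variable {V E : Type} [Fintype V] [Fintype E] [DecidableEq V] [DecidableEq E]
variable (src tgt : E → V)

lemma IsFlow.sub {x y : E → ℤ} (hx : IsFlow src tgt x) (hy : IsFlow src tgt y) :
    IsFlow src tgt (fun e => x e - y e) := by
  intro v
  have h1 := hx v
  have h2 := hy v
  simp only [sub_mul, Finset.sum_sub_distrib]
  omega

lemma IsFlow.add {x y : E → ℤ} (hx : IsFlow src tgt x) (hy : IsFlow src tgt y) :
    IsFlow src tgt (fun e => x e + y e) := by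
  intro v
  have h1 := hx v
  have h2 := hy v
  simp only [add_mul, Finset.sum_add_distrib]
  omega

/-- forward walk along a flow -/
noncomputable def walkFn {z : E → ℤ} (hz : IsFlow src tgt z) (e₁ : {e : E // z e ≠ 0}) :
    ℕ → {e : E // z e ≠ 0}
  | 0 => e₁
  | n+1 =>
    let h := out_at src tgt hz ⟨(walkFn hz e₁ n).1, (walkFn hz e₁ n).2, rfl⟩
    ⟨h.choose, h.choose_spec.1⟩

lemma walkFn_chain {z : E → ℤ} (hz : IsFlow src tgt z) (e₁ : {e : E // z e ≠ 0}) (n : ℕ) :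
    ztl src tgt z (walkFn src tgt hz e₁ (n+1)).1 = zhd src tgt z (walkFn src tgt hz e₁ n).1 := by
  exact (out_at src tgt hz ⟨(walkFn src tgt hz e₁ n).1,
    (walkFn src tgt hz e₁ n).2, rfl⟩).choose_spec.2

/-- key lemma: a sign-consistent cycle through any edge of a flow -/
lemma KL : ∀ (n : ℕ) (z : E → ℤ), IsFlow src tgt z → (∑ e, (z e).natAbs) ≤ n →
    ∀ e₁, z e₁ ≠ 0 → ∃ c : E → ℤ, IsFlow src tgt c ∧ c e₁ ≠ 0 ∧
      ∀ e, c e = 0 ∨ (c e = 1 ∧ 1 ≤ z e) ∨ (c e = -1 ∧ z e ≤ -1) := by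
  intro n
  induction n with
  | zero =>
    intro z hz hn e₁ h₁
    exfalso
    have : (z e₁).natAbs ≤ ∑ e, (z e).natAbs :=
      Finset.single_le_sum (f := fun e => (z e).natAbs) (fun e _ => Nat.zero_le _)
        (Finset.mem_univ e₁)
    omega
  | succ n ih =>
    intro z hz hn e₁ h₁
    classical
    set g : ℕ → E := fun k => (walkFn src tgt hz ⟨e₁, h₁⟩ k).1 with hg
    have hgne : ∀ k, z (g k) ≠ 0 := fun k => (walkFn src tgt hz ⟨e₁, h₁⟩ k).2
    have hchain : ∀ k, ztl src tgt z (g (k+1)) = zhd src tgt z (g k) :=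
      fun k => walkFn_chain src tgt hz ⟨e₁, h₁⟩ k
    set vs : ℕ → V := fun k => ztl src tgt z (g k) with hvs
    have hvchain : ∀ k, zhd src tgt z (g k) = vs (k+1) := fun k => (hchain k).symm
    -- pigeonhole
    have hrep : ∃ jj, ∃ i < jj, vs i = vs jj := by
      have hcard : Fintype.card V < Fintype.card (Fin (Fintype.card V + 1)) := by simp
      obtain ⟨a, b, hab, heq⟩ := Fintype.exists_ne_map_eq_of_card_lt
        (fun m : Fin (Fintype.card V + 1) => vs m) hcard
      rcases Nat.lt_or_ge a.1 b.1 with h | h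
      · exact ⟨b.1, a.1, h, heq⟩
      · have : b.1 < a.1 := by
          rcases Nat.lt_or_ge b.1 a.1 with h' | h'
          · exact h'
          · exact absurd (Fin.ext (le_antisymm h' h)) hab
        exact ⟨a.1, b.1, this, heq.symm⟩
    set j := Nat.find hrep with hj
    obtain ⟨i, hij, hvij⟩ := Nat.find_spec hrep
    have hjmin : ∀ m, m < j → ¬ ∃ i < m, vs i = vs m := fun m hm => Nat.find_min hrep hm
    have hvinj : ∀ a b, a < b → b < j → vs a ≠ vs b := by
      intro a b hab hbj hv
      exact hjmin b hbj ⟨a, hab, hv⟩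
    have hginj : ∀ a b, a ∈ Finset.Ico i j → b ∈ Finset.Ico i j → g a = g b → a = b := by
      intro a b ha hb hab
      rcases Finset.mem_Ico.1 ha with ⟨_, haj⟩
      rcases Finset.mem_Ico.1 hb with ⟨_, hbj⟩
      by_contra hne
      rcases Nat.lt_or_ge a b with h | h
      · exact hvinj a b h hbj (by rw [hvs]; simp only []; rw [hab])
      · have : b < a := by omega
        exact hvinj b a this haj (by rw [hvs]; simp only []; rw [hab])
    -- the extracted cycle
    set p := j - i with hp
    have hppos : 0 < p := by omega
    set g' : ℕ → E := fun a => g (i + a) with hg'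
    have hginj' : ∀ a b, a < p → b < p → g' a = g' b → a = b := by
      intro a b ha hb h
      have := hginj (i+a) (i+b) (Finset.mem_Ico.2 (by omega)) (Finset.mem_Ico.2 (by omega)) h
      omega
    have hchain' : ∀ a, a < p → ztl src tgt z (g' ((a+1) % p)) = zhd src tgt z (g' a) := by
      intro a ha
      rcases Nat.lt_or_ge (a+1) p with h | h
      · rw [Nat.mod_eq_of_lt h, hg']
        simp only []
        rw [show i + (a+1) = (i+a)+1 by omega]
        exact hchain (i+a)
      · have hap : a + 1 = p := by omega
        rw [hap, Nat.mod_self]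
        have h1 : zhd src tgt z (g (i+a)) = vs (i + a + 1) := hvchain (i+a)
        have h2 : i + a + 1 = j := by omega
        rw [hg']; simp only []
        rw [h1, h2, ← hvij]
        rfl
    set G : Finset E := (Finset.range p).image g' with hG
    set c' : E → ℤ := fun e => if e ∈ G then (if 1 ≤ z e then 1 else -1) else 0 with hc'
    have hc'flow : IsFlow src tgt c' := cycFlow src tgt z g' p hppos hginj' hchain'
    have hGsub : ∀ e ∈ G, z e ≠ 0 := by
      intro e he
      obtain ⟨a, _, rfl⟩ := Finset.mem_image.1 he
      exact hgne _
    have hc'sign : ∀ e, c' e = 0 ∨ (c' e = 1 ∧ 1 ≤ z e) ∨ (c' e = -1 ∧ z e ≤ -1) := by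
      intro e
      rw [hc']; simp only []
      by_cases hm : e ∈ G
      · have := hGsub e hm
        by_cases hs : 1 ≤ z e <;> simp [hm, hs] <;> omega
      · simp [hm]
    by_cases hmem : e₁ ∈ G
    · exact ⟨c', hc'flow, by
        rw [hc']; simp only [hmem, if_true]
        have := hGsub e₁ hmem
        split_ifs <;> omega, hc'sign⟩
    · -- recurse on z - c'
      set z' : E → ℤ := fun e => z e - c' e with hz'
      have hz'flow : IsFlow src tgt z' := IsFlow.sub src tgt hz hc'flow
      have hdec : ∀ e, (z' e).natAbs ≤ (z e).natAbs := by
        intro e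
        rcases hc'sign e with h | h | h <;> rw [hz'] <;> simp only [] <;> omega
      have hdecs : (z' (g' 0)).natAbs < (z (g' 0)).natAbs := by
        have hm : g' 0 ∈ G := Finset.mem_image.2 ⟨0, Finset.mem_range.2 hppos, rfl⟩
        have hne := hGsub _ hm
        rw [hz', hc']; simp only [hm, if_true]
        split_ifs <;> omega
      have hsum : (∑ e, (z' e).natAbs) ≤ n := by
        have h1 : ∑ e, (z' e).natAbs < ∑ e, (z e).natAbs :=
          Finset.sum_lt_sum (fun e _ => hdec e) ⟨g' 0, Finset.mem_univ _, hdecs⟩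
        omega
      have hz'e₁ : z' e₁ ≠ 0 := by
        rw [hz', hc']; simp only [hmem, if_false]
        omega
      obtain ⟨c, hcf, hce, hcs⟩ := ih z' hz'flow hsum e₁ hz'e₁
      refine ⟨c, hcf, hce, fun e => ?_⟩
      rcases hcs e with h | h | h
      · exact Or.inl h
      · refine Or.inr (Or.inl ⟨h.1, ?_⟩)
        have := h.2
        rcases hc'sign e with h' | h' | h' <;> rw [hz'] at this <;> simp only [] at this <;> omega
      · refine Or.inr (Or.inr ⟨h.1, ?_⟩)
        have := h.2
        rcases hc'sign e with h' | h' | h' <;> rw [hz'] at this <;> simp only [] at this <;> omega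

end Aux3

section Aux4
variable {V E : Type} [Fintype V] [Fintype E] [DecidableEq V] [DecidableEq E]
variable (src tgt : E → V) {x : E → ℤ}

lemma flowHead_eq_zhd (hval : ∀ e, x e = -1 ∨ x e = 0 ∨ x e = 1) (e : E) (he : x e ≠ 0) :
    flowHead src tgt x e = zhd src tgt x e := by
  unfold flowHead zhd
  rcases hval e with h | h | h <;> simp [h]

lemma heads_sub (hx : IsCycleClass src tgt x) {e e' : E} (he : x e ≠ 0) (he' : x e' ≠ 0)
    (h : zhd src tgt x e = zhd src tgt x e') : e = e' := by
  apply hx.2.2.2.1 (zhd src tgt x e')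
  · exact ⟨he, by rw [flowHead_eq_zhd src tgt hx.2.2.1 e he, h]⟩
  · exact ⟨he', by rw [flowHead_eq_zhd src tgt hx.2.2.1 e' he']⟩

lemma card_heads_eq_tails (hx : IsCycleClass src tgt x) (v : V) :
    (Finset.univ.filter (fun e => x e ≠ 0 ∧ zhd src tgt x e = v)).card =
    (Finset.univ.filter (fun e => x e ≠ 0 ∧ ztl src tgt x e = v)).card := by
  have h0 := flow_count src tgt hx.2.1 v
  have h1 : ∀ e : E, ((x e).natAbs : ℤ) * ((if zhd src tgt x e = v then 1 else 0)
      - (if ztl src tgt x e = v then 1 else 0)) =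
      (if x e ≠ 0 ∧ zhd src tgt x e = v then 1 else 0)
      - (if x e ≠ 0 ∧ ztl src tgt x e = v then 1 else 0) := by
    intro e
    rcases hx.2.2.1 e with h | h | h <;> split_ifs <;> simp_all <;> omega
  rw [Finset.sum_congr rfl (fun e _ => h1 e), Finset.sum_sub_distrib,
    Finset.sum_boole, Finset.sum_boole] at h0
  omega

lemma tails_sub (hx : IsCycleClass src tgt x) {e e' : E} (he : x e ≠ 0) (he' : x e' ≠ 0)
    (h : ztl src tgt x e = ztl src tgt x e') : e = e' := by
  by_contra hne
  set v := ztl src tgt x e' with hv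
  have h2 : 1 < (Finset.univ.filter (fun e => x e ≠ 0 ∧ ztl src tgt x e = v)).card := by
    apply Finset.one_lt_card.2
    exact ⟨e, Finset.mem_filter.2 ⟨Finset.mem_univ _, he, h⟩,
      e', Finset.mem_filter.2 ⟨Finset.mem_univ _, he', rfl⟩, hne⟩
  rw [← card_heads_eq_tails src tgt hx] at h2
  obtain ⟨a, ha, b, hb, hab⟩ := Finset.one_lt_card.1 h2
  rcases Finset.mem_filter.1 ha with ⟨_, ha1, ha2⟩
  rcases Finset.mem_filter.1 hb with ⟨_, hb1, hb2⟩
  exact hab (heads_sub src tgt hx ha1 hb1 (by rw [ha2, hb2]))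

/-- the successor edge along the cycle -/
noncomputable def succF (x : E → ℤ) (e : E) : E :=
  letI := Classical.dec
  if h : ∃ e', x e' ≠ 0 ∧ ztl src tgt x e' = zhd src tgt x e then h.choose else e

lemma succF_spec (hx : IsCycleClass src tgt x) {e : E} (he : x e ≠ 0) :
    x (succF src tgt x e) ≠ 0 ∧ ztl src tgt x (succF src tgt x e) = zhd src tgt x e := by
  have hex : ∃ e', x e' ≠ 0 ∧ ztl src tgt x e' = zhd src tgt x e :=
    out_at src tgt hx.2.1 ⟨e, he, rfl⟩
  unfold succF
  rw [dif_pos hex]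
  exact hex.choose_spec

lemma succF_unique (hx : IsCycleClass src tgt x) {e e' : E} (he : x e ≠ 0) (he' : x e' ≠ 0)
    (h : ztl src tgt x e' = zhd src tgt x e) : e' = succF src tgt x e := by
  have hs := succF_spec src tgt hx he
  exact tails_sub src tgt hx he' hs.1 (by rw [h, hs.2])

lemma succF_iter_supp (hx : IsCycleClass src tgt x) {e : E} (he : x e ≠ 0) (n : ℕ) :
    x ((succF src tgt x)^[n] e) ≠ 0 := by
  induction n with
  | zero => exact he
  | succ n ih =>
    rw [Function.iterate_succ_apply']
    exact (succF_spec src tgt hx ih).1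

lemma succF_inj (hx : IsCycleClass src tgt x) {e e' : E} (he : x e ≠ 0) (he' : x e' ≠ 0)
    (h : succF src tgt x e = succF src tgt x e') : e = e' := by
  have h1 := succF_spec src tgt hx he
  have h2 := succF_spec src tgt hx he'
  apply heads_sub src tgt hx he he'
  rw [← h1.2, ← h2.2, h]

lemma succF_cancel (hx : IsCycleClass src tgt x) (k : ℕ) :
    ∀ a b : E, x a ≠ 0 → x b ≠ 0 →
      (succF src tgt x)^[k] a = (succF src tgt x)^[k] b → a = b := by
  induction k with
  | zero => intro a b _ _ h; exact h
  | succ k ih =>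
    intro a b ha hb h
    rw [Function.iterate_succ_apply', Function.iterate_succ_apply'] at h
    exact ih a b ha hb (succF_inj src tgt hx (succF_iter_supp src tgt hx ha k)
      (succF_iter_supp src tgt hx hb k) h)

lemma succF_period (hx : IsCycleClass src tgt x) {e : E} (he : x e ≠ 0) :
    ∃ p, 0 < p ∧ (succF src tgt x)^[p] e = e := by
  have hcard : Fintype.card E < Fintype.card (Fin (Fintype.card E + 1)) := by simp
  obtain ⟨a, b, hab, heq⟩ := Fintype.exists_ne_map_eq_of_card_lt
    (fun m : Fin (Fintype.card E + 1) => (succF src tgt x)^[m.1] e) hcard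
  have key : ∀ m n : ℕ, m < n → (succF src tgt x)^[m] e = (succF src tgt x)^[n] e →
      ∃ p, 0 < p ∧ (succF src tgt x)^[p] e = e := by
    intro m n hmn hh
    refine ⟨n - m, by omega, ?_⟩
    apply succF_cancel src tgt hx m _ _ (succF_iter_supp src tgt hx he _) he
    rw [← Function.iterate_add_apply]
    rw [show m + (n - m) = n by omega]
    exact hh.symm
  rcases Nat.lt_or_ge a.1 b.1 with h | h
  · exact key a.1 b.1 h heq
  · have hlt : b.1 < a.1 := by
      rcases Nat.lt_or_ge b.1 a.1 with h' | h'
      · exact h'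
      · exact absurd (Fin.ext (le_antisymm h' h)) hab
    exact key b.1 a.1 hlt heq.symm

lemma shares_cases (hval : ∀ e, x e = -1 ∨ x e = 0 ∨ x e = 1) {e e' : E}
    (h : SharesVertex src tgt e e') :
    zhd src tgt x e = zhd src tgt x e' ∨ zhd src tgt x e = ztl src tgt x e' ∨
    ztl src tgt x e = zhd src tgt x e' ∨ ztl src tgt x e = ztl src tgt x e' := by
  unfold SharesVertex at h
  unfold zhd ztl
  split_ifs <;> tauto

lemma reach_step (hx : IsCycleClass src tgt x) {e e' : E} (he : x e ≠ 0) (he' : x e' ≠ 0)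
    (h : SharesVertex src tgt e e') : ∃ n, (succF src tgt x)^[n] e = e' := by
  rcases shares_cases src tgt hx.2.2.1 h with h1 | h1 | h1 | h1
  · exact ⟨0, heads_sub src tgt hx he he' h1⟩
  · exact ⟨1, (succF_unique src tgt hx he he' h1.symm).symm⟩
  · -- e = succF e'
    have hse : e = succF src tgt x e' := succF_unique src tgt hx he' he h1
    obtain ⟨p, hp, hpe⟩ := succF_period src tgt hx he'
    refine ⟨p - 1, ?_⟩
    rw [hse, ← Function.iterate_succ_apply, Nat.succ_eq_add_one,
      show p - 1 + 1 = p by omega]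
    exact hpe
  · exact ⟨0, tails_sub src tgt hx he he' h1⟩

lemma reach (hx : IsCycleClass src tgt x) {a b : E} (ha : x a ≠ 0) (hb : x b ≠ 0) :
    ∃ n, (succF src tgt x)^[n] a = b := by
  have hconn := hx.2.2.2.2 a b ha hb
  induction hconn with
  | refl => exact ⟨0, rfl⟩
  | tail hab hr ih =>
    obtain ⟨n₁, hn₁⟩ := ih hr.1
    obtain ⟨n₂, hn₂⟩ := reach_step src tgt hx hr.1 hr.2.1 hr.2.2
    refine ⟨n₂ + n₁, ?_⟩
    rw [Function.iterate_add_apply, hn₁, hn₂]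

lemma loop_only (hx : IsCycleClass src tgt x) {e : E} (he : x e ≠ 0) (hloop : src e = tgt e)
    {e' : E} (he' : x e' ≠ 0) : e' = e := by
  have hs : e = succF src tgt x e := by
    apply succF_unique src tgt hx he he
    unfold zhd ztl
    split_ifs <;> simp [hloop]
  have hiter : ∀ n, (succF src tgt x)^[n] e = e := by
    intro n
    induction n with
    | zero => rfl
    | succ n ih => rw [Function.iterate_succ_apply', ih, ← hs]
  obtain ⟨n, hn⟩ := reach src tgt hx he he'
  rw [hiter n] at hn
  exact hn.symm

end Aux4

section Aux5
variable {V E : Type} [Fintype V] [Fintype E] [DecidableEq V] [DecidableEq E]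

lemma zhd_congr (src tgt : E → V) {x y : E → ℤ} (e : E) (h : x e = y e) :
    zhd src tgt x e = zhd src tgt y e := by unfold zhd; rw [h]

lemma ztl_congr (src tgt : E → V) {x y : E → ℤ} (e : E) (h : x e = y e) :
    ztl src tgt x e = ztl src tgt y e := by unfold ztl; rw [h]

lemma final_blow (src tgt : E → V) (x₁ x₂ : E → ℤ)
    (hc₁ : IsCycleClass src tgt x₁) (hc₂ : IsCycleClass src tgt x₂)
    (part1 : ∀ e, x₁ e = 0 ∨ x₂ e = 0)
    (hunique : ∀ a b : E → ℤ, IsFlow src tgt a → IsFlow src tgt b → a ≠ 0 → b ≠ 0 →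
        a + b = x₁ + x₂ → (∑ e, a e * b e) = 0 →
        (a = x₁ ∧ b = x₂) ∨ (a = x₂ ∧ b = x₁))
    (g : ℕ → E) (p : ℕ) (hp : 1 < p)
    (hinj : ∀ a b, a < p → b < p → g a = g b → a = b)
    (hchain : ∀ a, a < p → ztl src tgt (fun e => x₁ e + x₂ e) (g ((a+1) % p))
        = zhd src tgt (fun e => x₁ e + x₂ e) (g a))
    (hsupp : ∀ a, a < p → x₁ (g a) ≠ 0 ∨ x₂ (g a) ≠ 0)
    (hga : x₁ (g 0) ≠ 0) (hgb : x₂ (g 1) ≠ 0)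
    (ea' : E) (hea' : x₂ ea' ≠ 0) (hnot : ∀ a, a < p → g a ≠ ea') : False := by
  classical
  set z : E → ℤ := fun e => x₁ e + x₂ e with hzdef
  have hzflow : IsFlow src tgt z := IsFlow.add src tgt hc₁.2.1 hc₂.2.1
  have hzval : ∀ e, (x₁ e ≠ 0 ∨ x₂ e ≠ 0) → z e = 1 ∨ z e = -1 := by
    intro e he
    rcases part1 e with h | h <;> rcases hc₁.2.2.1 e with h1 | h1 | h1 <;>
      rcases hc₂.2.2.1 e with h2 | h2 | h2 <;> simp [hzdef, h1, h2] at he ⊢ <;> omega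
  set G : Finset E := (Finset.range p).image g with hGdef
  set c : E → ℤ := fun e => if e ∈ G then (if 1 ≤ z e then 1 else -1) else 0 with hcdef
  have hcf : IsFlow src tgt c := cycFlow src tgt z g p (by omega) hinj hchain
  have hmemG : ∀ e, e ∈ G ↔ ∃ a, a < p ∧ g a = e := by
    intro e
    simp [hGdef, Finset.mem_image, Finset.mem_range]
  have hcz : ∀ e ∈ G, c e = z e := by
    intro e he
    obtain ⟨a, ha, rfl⟩ := (hmemG e).1 he
    have := hzval (g a) (hsupp a ha)
    simp only [hcdef, he, if_true]
    split_ifs <;> omega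
  set b : E → ℤ := fun e => z e - c e with hbdef
  have hbf : IsFlow src tgt b := IsFlow.sub src tgt hzflow hcf
  have hg0G : g 0 ∈ G := (hmemG _).2 ⟨0, by omega, rfl⟩
  have hg1G : g 1 ∈ G := (hmemG _).2 ⟨1, by omega, rfl⟩
  have hx₂g0 : x₂ (g 0) = 0 := (part1 (g 0)).resolve_left hga
  have hx₁g1 : x₁ (g 1) = 0 := (part1 (g 1)).resolve_right hgb
  have hcg0 : c (g 0) = x₁ (g 0) := by
    rw [hcz _ hg0G]; simp [hzdef, hx₂g0]
  have hcg1 : c (g 1) = x₂ (g 1) := by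
    rw [hcz _ hg1G]; simp [hzdef, hx₁g1]
  have hc0 : c ≠ 0 := by
    intro h
    have := congrFun h (g 0)
    rw [hcg0] at this
    exact hga this
  have heaG : ea' ∉ G := by
    intro h
    obtain ⟨a, ha, hae⟩ := (hmemG ea').1 h
    exact hnot a ha hae
  have hcea : c ea' = 0 := by simp [hcdef, heaG]
  have hb0 : b ≠ 0 := by
    intro h
    have hth := congrFun h ea'
    simp only [hbdef, Pi.zero_apply, hcea, sub_zero] at hth
    have hx1ea : x₁ ea' = 0 := (part1 ea').resolve_right hea'
    simp [hzdef, hx1ea] at hth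
    exact hea' hth
  have hsum : c + b = x₁ + x₂ := by
    funext e
    simp only [Pi.add_apply, hbdef, hzdef]
    ring
  have horth0 : (∑ e, c e * b e) = 0 := by
    apply Finset.sum_eq_zero
    intro e _
    by_cases hm : e ∈ G
    · have := hcz e hm
      simp only [hbdef]
      rw [← this]
      ring
    · simp only [hcdef, hm, if_false, zero_mul]
  rcases hunique c b hcf hbf hc0 hb0 hsum horth0 with ⟨h1, _⟩ | ⟨h1, _⟩
  · have := congrFun h1 (g 1)
    rw [hcg1, hx₁g1] at this
    exact hgb this
  · have h2 := congrFun h1 (g 0)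
    rw [hcg0] at h2
    rw [h2] at hga
    exact hga hx₂g0

end Aux5

section Aux6
variable {V E : Type} [Fintype V] [Fintype E] [DecidableEq V] [DecidableEq E]
variable (src tgt : E → V) {x : E → ℤ}

lemma inc_cases (x : E → ℤ) {e : E} {w : V} (hw : src e = w ∨ tgt e = w) :
    zhd src tgt x e = w ∨ ztl src tgt x e = w := by
  unfold zhd ztl; split_ifs <;> tauto

lemma seg_facts (hx : IsCycleClass src tgt x) {s t : E} (hs : x s ≠ 0) (K : ℕ)
    (hK : (succF src tgt x)^[K] s = t)
    (hmin : ∀ m, m < K → (succF src tgt x)^[m] s ≠ t) :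
    (∀ a b, a ≤ K → b ≤ K → (succF src tgt x)^[a] s = (succF src tgt x)^[b] s → a = b) ∧
    (∀ e', x e' ≠ 0 → succF src tgt x e' = s → e' ≠ t →
      ∀ k, k ≤ K → (succF src tgt x)^[k] s ≠ e') := by
  constructor
  · have key : ∀ a b, a < b → b ≤ K →
        (succF src tgt x)^[a] s = (succF src tgt x)^[b] s → False := by
      intro a b hab hbK heq
      have h1 : (succF src tgt x)^[a] ((succF src tgt x)^[b-a] s) = (succF src tgt x)^[a] s := by
        rw [← Function.iterate_add_apply, show a + (b-a) = b by omega]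
        exact heq.symm
      have hper : (succF src tgt x)^[b-a] s = s :=
        succF_cancel src tgt hx a _ _ (succF_iter_supp src tgt hx hs _) hs h1
      have h2 : (succF src tgt x)^[K - (b-a)] s = t := by
        have h3 : (succF src tgt x)^[(K - (b-a)) + (b-a)] s
            = (succF src tgt x)^[K - (b-a)] s := by
          rw [Function.iterate_add_apply, hper]
        rw [show (K - (b-a)) + (b-a) = K by omega, hK] at h3
        exact h3.symm
      exact hmin _ (by omega) h2
    intro a b ha hb heq
    rcases Nat.lt_trichotomy a b with h | h | h
    · exact absurd heq (fun hh => key a b h hb hh)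
    · exact h
    · exact absurd heq.symm (fun hh => key b a h ha hh)
  · intro e' he' hse hnet k hk hkeq
    have hper : (succF src tgt x)^[k+1] s = s := by
      rw [Function.iterate_succ_apply', hkeq, hse]
    rcases Nat.lt_or_ge k K with hlt | hge
    · have h2 : (succF src tgt x)^[K - (k+1)] s = t := by
        have h3 : (succF src tgt x)^[(K - (k+1)) + (k+1)] s
            = (succF src tgt x)^[K - (k+1)] s := by
          rw [Function.iterate_add_apply, hper]
        rw [show (K - (k+1)) + (k+1) = K by omega, hK] at h3
        exact h3.symm
      exact hmin _ (by omega) h2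
    · have hkK : k = K := by omega
      rw [hkK, hK] at hkeq
      exact hnet hkeq.symm

end Aux6


/-- `x` is the oriented boundary of the 2-chain (disk) `D` of faces of the embedding of `G`
in `S²`; `sides e` records the pair of faces to the left and right of the oriented edge `e`. -/
def BoundsDisk {E F : Type} [DecidableEq F] (sides : E → F × F) (D : Finset F) (x : E → ℤ) : Prop :=
  ∀ e, x e = (if (sides e).1 ∈ D then 1 else 0) - (if (sides e).2 ∈ D then 1 else 0)

/-- Let `G` be a planar graph embedded in `S²` (encoded by a face set `F` and the two faces
adjacent to each edge, with every cycle bounding a disk of faces), and let `C₁`, `C₂` be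
oriented cycles with `[C₁]·[C₂] = 0` and `[C₁] + [C₂]` rigid in `Flow(G)`.  Then `C₁` and
`C₂` share no edges and intersect in at most one vertex. -/
theorem rigid_cycles_meet_in_at_most_one_vertex {V E F : Type}
    [Fintype V] [Fintype E] [Fintype F] [DecidableEq V] [DecidableEq F]
    (src tgt : E → V) (sides : E → F × F) (x₁ x₂ : E → ℤ)
    (hc₁ : IsCycleClass src tgt x₁) (hc₂ : IsCycleClass src tgt x₂)
    (hD₁ : ∃ D : Finset F, BoundsDisk sides D x₁)
    (hD₂ : ∃ D : Finset F, BoundsDisk sides D x₂)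
    (horth : ∑ e, x₁ e * x₂ e = 0)
    -- `[C₁] + [C₂]` is rigid in `Flow(G)`: simple, with a unique unordered decomposition
    -- as a sum of two nonzero orthogonal flows.
    (hsimple : ∀ a b : E → ℤ, IsFlow src tgt a → IsFlow src tgt b → a ≠ 0 → b ≠ 0 →
        a + b = x₁ + x₂ → ∑ e, a e * b e ≤ 0)
    (hunique : ∀ a b : E → ℤ, IsFlow src tgt a → IsFlow src tgt b → a ≠ 0 → b ≠ 0 →
        a + b = x₁ + x₂ → (∑ e, a e * b e) = 0 →
        (a = x₁ ∧ b = x₂) ∨ (a = x₂ ∧ b = x₁)) :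
    (∀ e, x₁ e = 0 ∨ x₂ e = 0) ∧
    ({v : V | (∃ e, x₁ e ≠ 0 ∧ (src e = v ∨ tgt e = v)) ∧
        (∃ e, x₂ e ≠ 0 ∧ (src e = v ∨ tgt e = v))} : Set V).Subsingleton := by
  classical
  haveI : DecidableEq E := Classical.decEq E
  have hval₁ := hc₁.2.2.1
  have hval₂ := hc₂.2.2.1
  -- Part 1 : no shared edges
  have part1 : ∀ e, x₁ e = 0 ∨ x₂ e = 0 := by
    by_contra hcon
    push_neg at hcon
    obtain ⟨e₀, h01, h02⟩ := hcon
    -- find an edge where the cycles agree in direction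
    have hpos : ∃ e, x₁ e * x₂ e = 1 := by
      by_contra hnp
      push_neg at hnp
      have hle : ∀ e ∈ Finset.univ (α := E), x₁ e * x₂ e ≤ (0 : ℤ) := by
        intro e _
        rcases hval₁ e with h | h | h <;> rcases hval₂ e with h' | h' | h' <;>
          simp [h, h'] <;> first | omega | (exact absurd (by rw [h, h']; ring) (hnp e))
      have hlt : ∑ e, x₁ e * x₂ e < 0 := by
        have := Finset.sum_lt_sum (g := fun _ => (0:ℤ)) hle
          ⟨e₀, Finset.mem_univ e₀, by
            rcases hval₁ e₀ with h | h | h <;> rcases hval₂ e₀ with h' | h' | h' <;>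
              simp [h, h'] at h01 h02 ⊢ <;>
              first | omega | (exact absurd (by rw [h, h']; ring) (hnp e₀))⟩
        simpa using this
      omega
    obtain ⟨e₁, he₁⟩ := hpos
    set z : E → ℤ := fun e => x₁ e + x₂ e with hzdef
    have hzflow : IsFlow src tgt z := IsFlow.add src tgt hc₁.2.1 hc₂.2.1
    have hze₁ : z e₁ = 2 ∨ z e₁ = -2 := by
      rcases hval₁ e₁ with h | h | h <;> rcases hval₂ e₁ with h' | h' | h' <;>
        rw [h, h'] at he₁ <;> simp [hzdef, h, h'] <;> omega
    obtain ⟨c, hcf, hce₁, hcs⟩ := KL src tgt (∑ e, (z e).natAbs) z hzflow le_rfl e₁ (by omega)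
    set b : E → ℤ := fun e => z e - c e with hbdef
    have hbf : IsFlow src tgt b := IsFlow.sub src tgt hzflow hcf
    have hc0 : c ≠ 0 := by
      intro h
      exact hce₁ (congrFun h e₁)
    have hb0 : b ≠ 0 := by
      intro h
      have := congrFun h e₁
      simp only [hbdef, Pi.zero_apply] at this
      rcases hcs e₁ with h' | h' | h' <;> omega
    have hsum : c + b = x₁ + x₂ := by
      funext e
      simp only [Pi.add_apply, hbdef, hzdef]
      ring
    have hle := hsimple c b hcf hbf hc0 hb0 hsum
    have hgt : 0 < ∑ e, c e * b e := by
      have h1 : ∀ e ∈ Finset.univ (α := E), (0:ℤ) ≤ c e * b e := by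
        intro e _
        simp only [hbdef]
        rcases hcs e with h' | ⟨h'1, h'2⟩ | ⟨h'1, h'2⟩
        · rw [h', zero_mul]
        · rw [h'1, one_mul]; omega
        · rw [h'1, neg_one_mul]; omega
      have h2 : (0:ℤ) < c e₁ * b e₁ := by
        simp only [hbdef]
        rcases hcs e₁ with h' | ⟨h'1, h'2⟩ | ⟨h'1, h'2⟩
        · exact absurd h' hce₁
        · rw [h'1]; rcases hze₁ with hz | hz <;> rw [hz] <;> norm_num <;> omega
        · rw [h'1]; rcases hze₁ with hz | hz <;> rw [hz] <;> norm_num <;> omega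
      have := Finset.sum_lt_sum (f := fun _ => (0:ℤ)) (g := fun e => c e * b e)
        (by intro e he; exact h1 e he) ⟨e₁, Finset.mem_univ e₁, h2⟩
      simpa using this
    omega
  -- Part 2 : at most one shared vertex
  refine ⟨part1, ?_⟩
  intro u hu v hv
  by_contra hne
  obtain ⟨⟨eu1, heu1, hiu1⟩, ⟨eu2, heu2, hiu2⟩⟩ := hu
  obtain ⟨⟨ev1, hev1, hiv1⟩, ⟨ev2, hev2, hiv2⟩⟩ := hv
  have getio : ∀ (x : E → ℤ), IsCycleClass src tgt x → ∀ w : V,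
      (∃ e, x e ≠ 0 ∧ (src e = w ∨ tgt e = w)) →
      (∃ e, x e ≠ 0 ∧ zhd src tgt x e = w) ∧ (∃ e, x e ≠ 0 ∧ ztl src tgt x e = w) := by
    rintro x hx w ⟨e, he, hw⟩
    rcases inc_cases src tgt x hw with h | h
    · exact ⟨⟨e, he, h⟩, out_at src tgt hx.2.1 ⟨e, he, h⟩⟩
    · exact ⟨in_at src tgt hx.2.1 ⟨e, he, h⟩, ⟨e, he, h⟩⟩
  obtain ⟨⟨e_a, hea, heahd⟩, -⟩ := getio x₁ hc₁ u ⟨eu1, heu1, hiu1⟩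
  obtain ⟨-, ⟨fb', hfb'0, hfb'tl⟩⟩ := getio x₁ hc₁ v ⟨ev1, hev1, hiv1⟩
  obtain ⟨⟨ea', hea'0, hea'hd⟩, ⟨e_b, heb0, hebtl⟩⟩ := getio x₂ hc₂ u ⟨eu2, heu2, hiu2⟩
  obtain ⟨⟨fa', hfa'0, hfa'hd⟩, -⟩ := getio x₂ hc₂ v ⟨ev2, hev2, hiv2⟩
  set succ1 := succF src tgt x₁ with hsucc1
  set succ2 := succF src tgt x₂ with hsucc2
  -- disjoint supports
  have hdisj : ∀ e : E, x₁ e ≠ 0 → x₂ e ≠ 0 → False := by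
    intro e h1 h2
    rcases part1 e with h | h
    · exact h1 h
    · exact h2 h
  -- z-value congruences
  have hz1 : ∀ e, x₁ e ≠ 0 → (fun e => x₁ e + x₂ e) e = x₁ e := by
    intro e he
    have := (part1 e).resolve_left he
    simp [this]
  have hz2 : ∀ e, x₂ e ≠ 0 → (fun e => x₁ e + x₂ e) e = x₂ e := by
    intro e he
    have := (part1 e).resolve_right he
    simp [this]
  have hzhd1 : ∀ e, x₁ e ≠ 0 →
      zhd src tgt (fun e => x₁ e + x₂ e) e = zhd src tgt x₁ e :=
    fun e he => zhd_congr src tgt e (hz1 e he)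
  have hztl1 : ∀ e, x₁ e ≠ 0 →
      ztl src tgt (fun e => x₁ e + x₂ e) e = ztl src tgt x₁ e :=
    fun e he => ztl_congr src tgt e (hz1 e he)
  have hzhd2 : ∀ e, x₂ e ≠ 0 →
      zhd src tgt (fun e => x₁ e + x₂ e) e = zhd src tgt x₂ e :=
    fun e he => zhd_congr src tgt e (hz2 e he)
  have hztl2 : ∀ e, x₂ e ≠ 0 →
      ztl src tgt (fun e => x₁ e + x₂ e) e = ztl src tgt x₂ e :=
    fun e he => ztl_congr src tgt e (hz2 e he)
  -- e_b = succ2 ea'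
  have heb_succ : succ2 ea' = e_b :=
    (succF_unique src tgt hc₂ hea'0 heb0 (by rw [hebtl, hea'hd])).symm
  have hfa'ne : ea' ≠ fa' := by
    intro h
    apply hne
    rw [← hea'hd, h, hfa'hd]
  -- the x₂ segment from e_b to fa'
  have hexK : ∃ k, succ2^[k] e_b = fa' := reach src tgt hc₂ heb0 hfa'0
  set K := Nat.find hexK with hKdef
  have hK : succ2^[K] e_b = fa' := Nat.find_spec hexK
  have hKmin : ∀ m, m < K → succ2^[m] e_b ≠ fa' := fun m hm => Nat.find_min hexK hm
  obtain ⟨hinj2, hnot2'⟩ := seg_facts src tgt hc₂ heb0 K hK hKmin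
  have hnot2 : ∀ k, k ≤ K → succ2^[k] e_b ≠ ea' :=
    hnot2' ea' hea'0 heb_succ hfa'ne
  -- the x₁ segment from fb' to e_a
  have hexA : ∃ k, succ1^[k] fb' = e_a := reach src tgt hc₁ hfb'0 hea
  set KA := Nat.find hexA with hKAdef
  have hKA : succ1^[KA] fb' = e_a := Nat.find_spec hexA
  have hKAmin : ∀ m, m < KA → succ1^[m] fb' ≠ e_a := fun m hm => Nat.find_min hexA hm
  obtain ⟨hinj1, -⟩ := seg_facts src tgt hc₁ hfb'0 KA hKA hKAmin
  have hsupp2seg : ∀ k, x₂ (succ2^[k] e_b) ≠ 0 := succF_iter_supp src tgt hc₂ heb0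
  have hsupp1seg : ∀ k, x₁ (succ1^[k] fb') ≠ 0 := succF_iter_supp src tgt hc₁ hfb'0
  by_cases hcase : KA = 0
  · -- degenerate case : fb' = e_a
    have hfbea : fb' = e_a := by
      have := hKA
      rw [hcase, Function.iterate_zero_apply] at this
      exact this
    set p := K + 2 with hpdef
    set g : ℕ → E := fun a => if a = 0 then e_a else succ2^[a-1] e_b with hgdef
    have hg0 : g 0 = e_a := by simp [hgdef]
    have hgm : ∀ k, g (k+1) = succ2^[k] e_b := by
      intro k
      simp [hgdef]
    have hp : 1 < p := by omega
    have hinj : ∀ a b, a < p → b < p → g a = g b → a = b := by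
      intro a b ha hb hab
      rcases Nat.eq_zero_or_pos a with ha0 | ha0 <;> rcases Nat.eq_zero_or_pos b with hb0 | hb0
      · omega
      · exfalso
        rw [ha0, hg0, show b = (b-1)+1 by omega, hgm] at hab
        exact hdisj _ hea (hab ▸ hsupp2seg (b-1))
      · exfalso
        rw [hb0, hg0, show a = (a-1)+1 by omega, hgm] at hab
        exact hdisj _ hea (hab.symm ▸ hsupp2seg (a-1))
      · rw [show a = (a-1)+1 by omega, hgm, show b = (b-1)+1 by omega, hgm] at hab
        have := hinj2 (a-1) (b-1) (by omega) (by omega) hab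
        omega
    have hchain : ∀ a, a < p → ztl src tgt (fun e => x₁ e + x₂ e) (g ((a+1) % p))
        = zhd src tgt (fun e => x₁ e + x₂ e) (g a) := by
      intro a ha
      by_cases h0 : a = 0
      · have hmod : (0+1) % p = 1 := Nat.mod_eq_of_lt (by omega)
        have hg1 : g 1 = e_b := by
          have := hgm 0
          rw [Function.iterate_zero_apply] at this
          exact this
        rw [h0, hmod, hg1, hg0]
        rw [hztl2 e_b heb0, hzhd1 e_a hea, hebtl, heahd]
      · by_cases hmid : a ≤ K
        · have hmod : (a+1) % p = a+1 := Nat.mod_eq_of_lt (by omega)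
          have h1 : g (a+1) = succ2^[a] e_b := hgm a
          have h2 : g a = succ2^[a-1] e_b := by
            have := hgm (a-1)
            rw [show a-1+1 = a by omega] at this
            exact this
          have h3 := Function.iterate_succ_apply' succ2 (a-1) e_b
          rw [Nat.succ_eq_add_one, show a - 1 + 1 = a by omega] at h3
          rw [hmod, h1, h2, h3]
          have hd := hsupp2seg (a-1)
          have hs := succF_spec src tgt hc₂ hd
          rw [hztl2 _ hs.1, hzhd2 _ hd]
          exact hs.2
        · -- a = K + 1 = p - 1
          have haK : a = K + 1 := by omega
          have hmod : (K+1+1) % p = 0 := by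
            rw [show K+1+1 = p by omega, Nat.mod_self]
          rw [haK, hmod, hg0, hgm K, hK]
          rw [hztl1 e_a hea, hzhd2 fa' hfa'0, ← hfbea, hfb'tl, hfa'hd]
    have hsupp : ∀ a, a < p → x₁ (g a) ≠ 0 ∨ x₂ (g a) ≠ 0 := by
      intro a ha
      by_cases h0 : a = 0
      · rw [h0, hg0]; exact Or.inl hea
      · rw [show a = (a-1)+1 by omega, hgm]
        exact Or.inr (hsupp2seg _)
    have hga0 : x₁ (g 0) ≠ 0 := by rw [hg0]; exact hea
    have hgb1 : x₂ (g 1) ≠ 0 := by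
      have hg1 : g 1 = e_b := by
        have := hgm 0
        rw [Function.iterate_zero_apply] at this
        exact this
      rw [hg1]; exact heb0
    have hnot : ∀ a, a < p → g a ≠ ea' := by
      intro a ha hh
      by_cases h0 : a = 0
      · rw [h0, hg0] at hh
        exact hdisj _ hea (hh ▸ hea'0)
      · rw [show a = (a-1)+1 by omega, hgm] at hh
        exact hnot2 (a-1) (by omega) hh
    exact final_blow src tgt x₁ x₂ hc₁ hc₂ part1 hunique g p hp hinj hchain hsupp
      hga0 hgb1 ea' hea'0 hnot
  · -- main case : KA ≥ 1
    have hKA1 : 1 ≤ KA := by omega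
    set p := K + KA + 2 with hpdef
    set g : ℕ → E := fun a => if a = 0 then e_a else
      if a ≤ K + 1 then succ2^[a-1] e_b else succ1^[a - (K+2)] fb' with hgdef
    have hg0 : g 0 = e_a := by simp [hgdef]
    have hgm : ∀ k, k ≤ K → g (k+1) = succ2^[k] e_b := by
      intro k hk
      have h1 : k + 1 ≠ 0 := by omega
      have h2 : k + 1 ≤ K + 1 := by omega
      simp [hgdef, h1, h2]
    have hgt : ∀ l, l ≤ KA - 1 → g (K+2+l) = succ1^[l] fb' := by
      intro l hl
      have h1 : K+2+l ≠ 0 := by omega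
      have h2 : ¬ (K+2+l ≤ K + 1) := by omega
      simp only [hgdef, h1, if_false, h2]
      rw [show K+2+l - (K+2) = l by omega]
    have hp : 1 < p := by omega
    -- uniform x₁-region description
    have hreg1 : ∀ a, a < p → (a = 0 ∨ ¬ (a ≤ K+1)) →
        ∃ l, l ≤ KA ∧ g a = succ1^[l] fb' ∧ (a = 0 → l = KA) ∧ (a ≠ 0 → l = a - (K+2) ∧ l ≤ KA - 1) := by
      intro a ha hcases
      rcases hcases with h0 | hbig
      · exact ⟨KA, le_rfl, by rw [h0, hg0, hKA], fun _ => rfl, fun h => absurd h0 h⟩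
      · refine ⟨a - (K+2), by omega, ?_, fun h => absurd h (by omega), fun _ => ⟨rfl, by omega⟩⟩
        have := hgt (a - (K+2)) (by omega)
        rw [show K+2+(a-(K+2)) = a by omega] at this
        exact this
    have hinj : ∀ a b, a < p → b < p → g a = g b → a = b := by
      intro a b ha hb hab
      have hx1a : (a = 0 ∨ ¬ (a ≤ K+1)) ∨ (a ≠ 0 ∧ a ≤ K + 1) := by omega
      have hx1b : (b = 0 ∨ ¬ (b ≤ K+1)) ∨ (b ≠ 0 ∧ b ≤ K + 1) := by omega
      rcases hx1a with h1a | h1a <;> rcases hx1b with h1b | h1b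
      · obtain ⟨la, hla, hga', h0a, hna⟩ := hreg1 a ha h1a
        obtain ⟨lb, hlb, hgb', h0b, hnb⟩ := hreg1 b hb h1b
        rw [hga', hgb'] at hab
        have hlab := hinj1 la lb hla hlb hab
        rcases h1a with h1a | h1a <;> rcases h1b with h1b | h1b
        · omega
        · have := h0a h1a; have := hnb (by omega); omega
        · have := h0b h1b; have := hna (by omega); omega
        · have := hna (by omega); have := hnb (by omega); omega
      · exfalso
        obtain ⟨la, hla, hga', -, -⟩ := hreg1 a ha h1a
        rw [hga', show b = (b-1)+1 by omega, hgm (b-1) (by omega)] at hab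
        exact hdisj _ (hsupp1seg la) (hab ▸ hsupp2seg (b-1))
      · exfalso
        obtain ⟨lb, hlb, hgb', -, -⟩ := hreg1 b hb h1b
        rw [hgb', show a = (a-1)+1 by omega, hgm (a-1) (by omega)] at hab
        exact hdisj _ (hsupp1seg lb) (hab.symm ▸ hsupp2seg (a-1))
      · rw [show a = (a-1)+1 by omega, hgm (a-1) (by omega),
          show b = (b-1)+1 by omega, hgm (b-1) (by omega)] at hab
        have := hinj2 (a-1) (b-1) (by omega) (by omega) hab
        omega
    have hchain : ∀ a, a < p → ztl src tgt (fun e => x₁ e + x₂ e) (g ((a+1) % p))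
        = zhd src tgt (fun e => x₁ e + x₂ e) (g a) := by
      intro a ha
      by_cases h0 : a = 0
      · have hmod : (0+1) % p = 1 := Nat.mod_eq_of_lt (by omega)
        have hg1 : g 1 = e_b := by
          have := hgm 0 (by omega)
          rw [Function.iterate_zero_apply] at this
          exact this
        rw [h0, hmod, hg1, hg0]
        rw [hztl2 e_b heb0, hzhd1 e_a hea, hebtl, heahd]
      · by_cases hmid : a ≤ K
        · have hmod : (a+1) % p = a+1 := Nat.mod_eq_of_lt (by omega)
          have h1 : g (a+1) = succ2^[a] e_b := hgm a hmid
          have h2 : g a = succ2^[a-1] e_b := by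
            have := hgm (a-1) (by omega)
            rw [show a-1+1 = a by omega] at this
            exact this
          have h3 := Function.iterate_succ_apply' succ2 (a-1) e_b
          rw [Nat.succ_eq_add_one, show a - 1 + 1 = a by omega] at h3
          rw [hmod, h1, h2, h3]
          have hd := hsupp2seg (a-1)
          have hs := succF_spec src tgt hc₂ hd
          rw [hztl2 _ hs.1, hzhd2 _ hd]
          exact hs.2
        · by_cases htop : a = K + 1
          · have hmod : (K+1+1) % p = K+2 := by
              rw [Nat.mod_eq_of_lt (by omega)]
            have hgK2 : g (K+2) = fb' := by
              have := hgt 0 (by omega)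
              rw [Nat.add_zero, Function.iterate_zero_apply] at this
              exact this
            rw [htop, hmod, hgK2, hgm K le_rfl, hK]
            rw [hztl1 fb' hfb'0, hzhd2 fa' hfa'0, hfb'tl, hfa'hd]
          · by_cases hup : a < K + KA + 1
            · -- K+2 ≤ a ≤ K+KA
              have hmod : (a+1) % p = a+1 := Nat.mod_eq_of_lt (by omega)
              have hga' : g a = succ1^[a-(K+2)] fb' := by
                have := hgt (a-(K+2)) (by omega)
                rw [show K+2+(a-(K+2)) = a by omega] at this
                exact this
              have hga1 : g (a+1) = succ1^[a-(K+2)+1] fb' := by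
                have := hgt (a-(K+2)+1) (by omega)
                rw [show K+2+(a-(K+2)+1) = a+1 by omega] at this
                exact this
              have h3 := Function.iterate_succ_apply' succ1 (a-(K+2)) fb'
              rw [Nat.succ_eq_add_one] at h3
              rw [hmod, hga1, hga', h3]
              have hd := hsupp1seg (a-(K+2))
              have hs := succF_spec src tgt hc₁ hd
              rw [hztl1 _ hs.1, hzhd1 _ hd]
              exact hs.2
            · -- a = K + KA + 1 = p - 1
              have haEq : a = K + KA + 1 := by omega
              have hmod : (K+KA+1+1) % p = 0 := by
                rw [show K+KA+1+1 = p by omega, Nat.mod_self]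
              have hga' : g a = succ1^[KA-1] fb' := by
                have := hgt (KA-1) (by omega)
                rw [show K+2+(KA-1) = a by omega] at this
                exact this
              rw [haEq, hmod, hg0, ← haEq, hga']
              have hd := hsupp1seg (KA-1)
              have h4 := Function.iterate_succ_apply' succ1 (KA-1) fb'
              rw [Nat.succ_eq_add_one, show KA - 1 + 1 = KA by omega] at h4
              have he_succ : e_a = succ1 (succ1^[KA-1] fb') := by
                rw [← hKA]; exact h4
              have hs := succF_spec src tgt hc₁ hd
              rw [hztl1 e_a hea, hzhd1 _ hd, he_succ]
              exact hs.2
    have hsupp : ∀ a, a < p → x₁ (g a) ≠ 0 ∨ x₂ (g a) ≠ 0 := by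
      intro a ha
      by_cases h1a : a = 0 ∨ ¬ (a ≤ K+1)
      · obtain ⟨la, -, hga', -, -⟩ := hreg1 a ha h1a
        rw [hga']
        exact Or.inl (hsupp1seg la)
      · push_neg at h1a
        rw [show a = (a-1)+1 by omega, hgm (a-1) (by omega)]
        exact Or.inr (hsupp2seg _)
    have hga0 : x₁ (g 0) ≠ 0 := by rw [hg0]; exact hea
    have hgb1 : x₂ (g 1) ≠ 0 := by
      have hg1 : g 1 = e_b := by
        have := hgm 0 (by omega)
        rw [Function.iterate_zero_apply] at this
        exact this
      rw [hg1]; exact heb0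
    have hnot : ∀ a, a < p → g a ≠ ea' := by
      intro a ha hh
      by_cases h1a : a = 0 ∨ ¬ (a ≤ K+1)
      · obtain ⟨la, -, hga', -, -⟩ := hreg1 a ha h1a
        rw [hga'] at hh
        exact hdisj _ (hsupp1seg la) (hh ▸ hea'0)
      · push_neg at h1a
        rw [show a = (a-1)+1 by omega, hgm (a-1) (by omega)] at hh
        exact hnot2 (a-1) (by omega) hh
    exact final_blow src tgt x₁ x₂ hc₁ hc₂ part1 hunique g p hp hinj hchain hsupp
      hga0 hgb1 ea' hea'0 hnot
end

section
/- Let G be a planar graph embedded in S² and let C₁,…,C_n be pairwise nested oriented cycles in G with [C_i]·[C_j] > 0 for all i, j. Then C₁,…,C_n are nested (the disks they bound can be linearly ordered by inclusion) and all n cycles share at least one common edge. -/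
/-- Two cycles, bounding disks `D₁` and `D₂` in `S²`, are *nested* if some choice among
these disks and their complements is ordered by inclusion. -/
def NestedPair {F : Type} [Fintype F] [DecidableEq F] (D₁ D₂ : Finset F) : Prop :=
  D₁ ⊆ D₂ ∨ D₂ ⊆ D₁ ∨ D₁ ⊆ D₂ᶜ ∨ D₂ᶜ ⊆ D₁


lemma disjoint_sum_nonpos {E F : Type} [Fintype E] [DecidableEq F]
    (sides : E → F × F) (D₁ D₂ : Finset F) (x₁ x₂ : E → ℤ)
    (h₁ : BoundsDisk sides D₁ x₁) (h₂ : BoundsDisk sides D₂ x₂)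
    (hd : ∀ f, f ∈ D₁ → f ∉ D₂) : ∑ e, x₁ e * x₂ e ≤ 0 := by
  apply Finset.sum_nonpos; intro e _
  rw [h₁ e, h₂ e]
  have hs := hd (sides e).1
  have ht := hd (sides e).2
  by_cases a : (sides e).1 ∈ D₁ <;> by_cases b : (sides e).2 ∈ D₁ <;>
    by_cases c : (sides e).1 ∈ D₂ <;> by_cases d : (sides e).2 ∈ D₂ <;> simp_all

lemma cover_sum_nonpos {E F : Type} [Fintype E] [DecidableEq F]
    (sides : E → F × F) (D₁ D₂ : Finset F) (x₁ x₂ : E → ℤ)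
    (h₁ : BoundsDisk sides D₁ x₁) (h₂ : BoundsDisk sides D₂ x₂)
    (hd : ∀ f, f ∉ D₂ → f ∈ D₁) : ∑ e, x₁ e * x₂ e ≤ 0 := by
  apply Finset.sum_nonpos; intro e _
  rw [h₁ e, h₂ e]
  have hs := hd (sides e).1
  have ht := hd (sides e).2
  by_cases a : (sides e).1 ∈ D₁ <;> by_cases b : (sides e).2 ∈ D₁ <;>
    by_cases c : (sides e).1 ∈ D₂ <;> by_cases d : (sides e).2 ∈ D₂ <;> simp_all

/-- (Helly property for cycles in a planar graph.)  Let `G` be a planar graph embedded in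
`S²` and let `C₁,…,Cₙ` be pairwise nested oriented cycles with `[Cᵢ]·[Cⱼ] > 0` for all
`i, j`.  Then `C₁,…,Cₙ` are nested: (a suitable choice of) the disks they bound can be
linearly ordered by inclusion, and all `n` cycles share at least one common edge. -/
theorem nested_cycles_common_edge {V E F : Type}
    [Fintype V] [Fintype E] [Fintype F] [DecidableEq V] [DecidableEq F]
    (src tgt : E → V) (sides : E → F × F) {n : ℕ} (hn : 0 < n)
    (x : Fin n → E → ℤ) (D : Fin n → Finset F)
    (hcyc : ∀ i, IsCycleClass src tgt (x i))
    (hbd : ∀ i, BoundsDisk sides (D i) (x i))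
    (hnested : ∀ i j, NestedPair (D i) (D j))
    (hpos : ∀ i j, 0 < ∑ e, x i e * x j e) :
    (∃ (σ : Equiv.Perm (Fin n)) (D' : Fin n → Finset F),
        (∀ i, D' i = D i ∨ D' i = (D i)ᶜ) ∧
        ∀ i j : Fin n, i ≤ j → D' (σ i) ⊆ D' (σ j)) ∧
    ∃ e : E, ∀ i, x i e ≠ 0 := by
  -- Pairwise comparability of the disks under inclusion
  have hcomp : ∀ i j, D i ⊆ D j ∨ D j ⊆ D i := by
    intro i j
    rcases hnested i j with h | h | h | h
    · exact Or.inl h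
    · exact Or.inr h
    · exfalso
      have := disjoint_sum_nonpos sides (D i) (D j) (x i) (x j) (hbd i) (hbd j)
        (fun f hf => Finset.mem_compl.mp (h hf))
      exact absurd (hpos i j) (not_lt.mpr this)
    · exfalso
      have := cover_sum_nonpos sides (D i) (D j) (x i) (x j) (hbd i) (hbd j)
        (fun f hf => h (Finset.mem_compl.mpr hf))
      exact absurd (hpos i j) (not_lt.mpr this)
  have hcard : ∀ i j : Fin n, (D i).card ≤ (D j).card → D i ⊆ D j := by
    intro i j hc
    rcases hcomp i j with h | h
    · exact h
    · exact (Finset.eq_of_subset_of_card_le h hc).ge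
  -- sort by cardinality
  set σ : Equiv.Perm (Fin n) := Tuple.sort (fun i => (D i).card) with hσ
  have hmono : Monotone ((fun i => (D i).card) ∘ σ) := Tuple.monotone_sort _
  have hchain : ∀ i j : Fin n, i ≤ j → D (σ i) ⊆ D (σ j) := by
    intro i j hij
    exact hcard _ _ (hmono hij)
  constructor
  · exact ⟨σ, D, fun i => Or.inl rfl, hchain⟩
  · -- common edge
    have i0 : Fin n := ⟨0, hn⟩
    set a : Fin n := σ ⟨0, hn⟩ with ha
    set b : Fin n := σ ⟨n - 1, Nat.sub_lt hn one_pos⟩ with hb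
    have hsum := hpos a b
    obtain ⟨e, _, he⟩ := Finset.exists_ne_zero_of_sum_ne_zero (ne_of_gt hsum)
    have hxa : x a e ≠ 0 := fun h => he (by rw [h]; ring)
    have hxb : x b e ≠ 0 := fun h => he (by rw [h]; ring)
    refine ⟨e, fun i => ?_⟩
    have hDa : D a ⊆ D i := by
      have := hchain ⟨0, hn⟩ (σ.symm i) (Fin.mk_le_of_le_val (Nat.zero_le _))
      simpa using this
    have hDb : D i ⊆ D b := by
      have := hchain (σ.symm i) ⟨n - 1, Nat.sub_lt hn one_pos⟩
        (by exact Fin.mk_le_mk.mpr (Nat.le_sub_one_of_lt (σ.symm i).isLt) |> fun h => h)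
      simpa using this
    have h1 := (hbd a) e
    have h2 := (hbd b) e
    have h3 := (hbd i) e
    rw [h3]
    by_cases p : (sides e).1 ∈ D a
    · have p2 : (sides e).2 ∉ D a := by
        intro q; apply hxa; rw [h1]; simp [p, q]
      have pb : (sides e).1 ∈ D b := hDb (hDa p)
      have qb : (sides e).2 ∉ D b := by
        intro q; apply hxb; rw [h2]; simp [pb, q]
      have pi : (sides e).1 ∈ D i := hDa p
      have qi : (sides e).2 ∉ D i := fun q => qb (hDb q)
      simp [pi, qi]
    · have p2 : (sides e).2 ∈ D a := by
        by_contra q; apply hxa; rw [h1]; simp [p, q]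
      have qb : (sides e).2 ∈ D b := hDb (hDa p2)
      have pb : (sides e).1 ∉ D b := by
        intro q; apply hxb; rw [h2]; simp [q, qb]
      have qi : (sides e).2 ∈ D i := hDa p2
      have pi : (sides e).1 ∉ D i := fun q => pb (hDb q)
      simp [pi, qi]
end
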